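/- arXiv:math/0504076 — 4 statements merged into one kernel-verified Lean document; each statement's English description precedes it below -/
import Mathlib

section
/- Local a priori sup-norm estimate for the semilinear hyperbolic mixed problem: Suppose Λ, F, H, A are continuous, the hyperbolicity condition holds, and the Lipschitz hypotheses hold with constants L_F, L_H ≥ 0. Set q₀ = n·L_F·(1 + n·L_H). Let t₀ > 0 satisfy q₀·t₀ < 1 and t₀ · max_{1≤i≤n} sup_{[0,l]×[0,t₀]} |Λ_i| < l. Then every continuously differentiable solution U of the mixed problem on [0,l]×[0,t₀] satisfies max_{1≤i≤n} sup_{[0,l]×[0,t₀]} |U_i(x,t)| ≤ (1/(1 − q₀t₀)) · [ ( max_{1≤i≤n} sup_{x∈[0,l]} |A_i(x)| + t₀ · max_{1≤i≤n} sup_{(x,t)∈[0,l]×[0,t₀]} |F_i(x,t,0)| ) · (1 + n·L_H) + max_{1≤i≤n} sup_{t∈[0,t₀]} |H_i(t,0)| ]. -/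
open Set

noncomputable section

/-- The rectangle `Π^T = [0,l] × [0,T]` as a subset of `ℝ × ℝ` (first coordinate `x`,
second coordinate `t`). -/
def MixedRect (l T : ℝ) : Set (ℝ × ℝ) := Set.Icc 0 l ×ˢ Set.Icc 0 T

/-- The boundary trace `V(t) = (U_1(0,t),…,U_k(0,t),U_{k+1}(l,t),…,U_n(l,t))`
(with 0-based indices: components `i < k` are taken at `x = 0`, components `i ≥ k`
at `x = l`). -/
def bTrace (n k : ℕ) (l : ℝ) (U : ℝ × ℝ → Fin n → ℝ) (t : ℝ) : Fin n → ℝ :=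
  fun i => if (i : ℕ) < k then U (0, t) i else U (l, t) i

/-- `U` solves the mixed problem (i)–(iii) on `[0,l] × [0,T]`:
(i) `∂_t U_i + Λ_i ∂_x U_i = F_i(x,t,U)` on the rectangle,
(ii) `U(x,0) = A(x)`,
(iii) `U_i(0,t) = H_i(t,V(t))` for `i ≥ k` and `U_i(l,t) = H_i(t,V(t))` for `i < k`
(0-based indices). -/
def IsMixedSolution (n k : ℕ) (l T : ℝ)
    (Λ : ℝ × ℝ → Fin n → ℝ) (F : ℝ × ℝ → (Fin n → ℝ) → Fin n → ℝ)
    (A : ℝ → Fin n → ℝ) (H : ℝ → (Fin n → ℝ) → Fin n → ℝ)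
    (U : ℝ × ℝ → Fin n → ℝ) : Prop :=
  (∀ p ∈ MixedRect l T, ∀ i : Fin n,
      fderivWithin ℝ (fun q => U q i) (MixedRect l T) p (0, 1)
        + Λ p i * fderivWithin ℝ (fun q => U q i) (MixedRect l T) p (1, 0)
        = F p (U p) i) ∧
  (∀ x ∈ Set.Icc (0 : ℝ) l, ∀ i : Fin n, U (x, 0) i = A x i) ∧
  (∀ t ∈ Set.Icc (0 : ℝ) T, ∀ i : Fin n,
      (k ≤ (i : ℕ) → U (0, t) i = H t (bTrace n k l U t) i) ∧
      ((i : ℕ) < k → U (l, t) i = H t (bTrace n k l U t) i))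

/-- Hyperbolicity: `Λ_i < 0` for the first `k` components and `Λ_i > 0` for the
remaining ones, on the set `S` (0-based indices). -/
def HyperbolicOn (n k : ℕ) (Λ : ℝ × ℝ → Fin n → ℝ) (S : Set (ℝ × ℝ)) : Prop :=
  ∀ p ∈ S, ∀ i : Fin n, ((i : ℕ) < k → Λ p i < 0) ∧ (k ≤ (i : ℕ) → 0 < Λ p i)

/-- The Lipschitz hypothesis for `F` with constant `LF` on the set `S`. -/
def LipschitzFOn (n : ℕ) (F : ℝ × ℝ → (Fin n → ℝ) → Fin n → ℝ)
    (S : Set (ℝ × ℝ)) (LF : ℝ) : Prop :=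
  ∀ p ∈ S, ∀ i : Fin n, ∀ y₁ y₂ : Fin n → ℝ,
    |F p y₁ i - F p y₂ i| ≤ LF * ∑ j, |y₁ j - y₂ j|

/-- The Lipschitz hypothesis for `H` with constant `LH` on `[0,T]`. -/
def LipschitzHOn (n : ℕ) (H : ℝ → (Fin n → ℝ) → Fin n → ℝ) (T : ℝ) (LH : ℝ) : Prop :=
  ∀ t ∈ Set.Icc (0 : ℝ) T, ∀ i : Fin n, ∀ z₁ z₂ : Fin n → ℝ,
    |H t z₁ i - H t z₂ i| ≤ LH * ∑ j, |z₁ j - z₂ j|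

/-- Compatibility hypotheses: `A` vanishes outside a compact subset of `(0,l)`, and
`t ↦ H(t,0)` vanishes on a neighborhood of `t = 0`. -/
def CompatData (n : ℕ) (l : ℝ) (A : ℝ → Fin n → ℝ)
    (H : ℝ → (Fin n → ℝ) → Fin n → ℝ) : Prop :=
  (∃ K : Set ℝ, IsCompact K ∧ K ⊆ Set.Ioo 0 l ∧ ∀ x ∉ K, A x = 0) ∧
  (∃ δ > (0 : ℝ), ∀ t ∈ Set.Ico (0 : ℝ) δ, H t 0 = 0)

/-- Maximum of a continuous two-variable function over `σ ∈ [0,1]` is attained. -/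
lemma sup_attained {T t : ℝ} (ht : t ∈ Icc (0:ℝ) T) {g : ℝ × ℝ → ℝ}
    (hg : ContinuousOn g (Icc 0 1 ×ˢ Icc 0 T)) :
    ∃ σ ∈ Icc (0:ℝ) 1, sSup ((fun σ => g (σ, t)) '' Icc (0:ℝ) 1) = g (σ, t) ∧
      ∀ σ' ∈ Icc (0:ℝ) 1, g (σ', t) ≤ g (σ, t) := by
  have hcont : ContinuousOn (fun σ => g (σ, t)) (Icc (0:ℝ) 1) := by
    have hmap : MapsTo (fun σ : ℝ => (σ, t)) (Icc (0:ℝ) 1) (Icc 0 1 ×ˢ Icc 0 T) :=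
      fun σ hσ => ⟨hσ, ht⟩
    exact hg.comp ((continuous_id.prodMk continuous_const).continuousOn) hmap
  exact isCompact_Icc.exists_sSup_image_eq_and_ge (nonempty_Icc.2 zero_le_one) hcont

/-- Continuity in the parameter of the sup over `σ ∈ [0,1]`. -/
lemma contOn_sup_param {T : ℝ} {g : ℝ × ℝ → ℝ}
    (hg : ContinuousOn g (Icc 0 1 ×ˢ Icc 0 T)) :
    ContinuousOn (fun t => sSup ((fun σ => g (σ, t)) '' Icc (0:ℝ) 1)) (Icc 0 T) := by
  have hK : IsCompact (Icc (0:ℝ) 1 ×ˢ Icc (0:ℝ) T) := isCompact_Icc.prod isCompact_Icc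
  have hu := hK.uniformContinuousOn_of_continuous hg
  rw [Metric.uniformContinuousOn_iff] at hu
  intro t ht
  rw [Metric.continuousWithinAt_iff]
  intro ε hε
  obtain ⟨δ, hδ, hδ'⟩ := hu ε hε
  refine ⟨δ, hδ, fun t' ht' hdist => ?_⟩
  obtain ⟨σ, hσ, hval, hmax⟩ := sup_attained ht hg
  obtain ⟨σ', hσ', hval', hmax'⟩ := sup_attained ht' hg
  have hd : ∀ σ₀ : ℝ, σ₀ ∈ Icc (0:ℝ) 1 → dist (g (σ₀, t')) (g (σ₀, t)) < ε := by
    intro σ₀ hσ₀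
    apply hδ' (σ₀, t') ⟨hσ₀, ht'⟩ (σ₀, t) ⟨hσ₀, ht⟩
    rw [Prod.dist_eq]
    simp only [dist_self]
    rw [max_eq_right dist_nonneg]
    exact hdist
  rw [hval, hval', Real.dist_eq, abs_lt]
  have h1 := hd σ hσ
  have h2 := hd σ' hσ'
  rw [Real.dist_eq, abs_lt] at h1 h2
  have h3 := hmax σ' hσ'
  have h4 := hmax' σ hσ
  constructor <;> nlinarith

set_option maxHeartbeats 1000000 in
lemma key_estimate (n : ℕ) (l t₀ : ℝ) (hl : 0 < l) (ht₀ : 0 < t₀)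
    (U : ℝ × ℝ → Fin n → ℝ) (Λ : ℝ × ℝ → Fin n → ℝ) (G : ℝ × ℝ → ℝ)
    (i : Fin n) (s : ℝ) (hs : s = 1 ∨ s = -1)
    (hU : ContDiffOn ℝ 1 U (MixedRect l t₀))
    (hΛ : ContinuousOn (fun p => Λ p i) (MixedRect l t₀))
    (hpde : ∀ p ∈ MixedRect l t₀,
      fderivWithin ℝ (fun q => U q i) (MixedRect l t₀) p (0, 1)
        + Λ p i * fderivWithin ℝ (fun q => U q i) (MixedRect l t₀) p (1, 0) = G p)
    (a b : ℝ) (ha : 0 ≤ a) (hb : 0 ≤ b) (hab : a * t₀ + b * t₀ < l)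
    (C1 : ℝ) (hC1 : ∀ p ∈ MixedRect l t₀, |G p| ≤ C1)
    (B' : ℝ) (hB0 : ∀ x ∈ Icc (0:ℝ) l, s * U (x, 0) i ≤ B')
    (hesc : ∀ t ∈ Ico (0:ℝ) t₀, ∀ x ∈ Icc (a*t) (l - b*t),
      B' + C1 * t < s * U (x, t) i →
      (a * t < x ∨ Λ (x, t) i ≤ a) ∧ (x < l - b * t ∨ -Λ (x, t) i ≤ b)) :
    ∀ t ∈ Icc (0:ℝ) t₀, ∀ x ∈ Icc (a*t) (l - b*t), s * U (x,t) i ≤ B' + C1 * t := by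
  set R := MixedRect l t₀ with hRdef
  have hsabs : |s| = 1 := by rcases hs with h | h <;> simp [h]
  -- basic facts about the rectangle
  have hRmem : ∀ x t : ℝ, 0 ≤ x → x ≤ l → 0 ≤ t → t ≤ t₀ → (x, t) ∈ R :=
    fun x t h1 h2 h3 h4 => ⟨⟨h1, h2⟩, ⟨h3, h4⟩⟩
  have hRconv : Convex ℝ R := (convex_Icc (0:ℝ) l).prod (convex_Icc (0:ℝ) t₀)
  have hRud : UniqueDiffOn ℝ R := by
    apply uniqueDiffOn_convex hRconv
    rw [hRdef, MixedRect, interior_prod_eq, interior_Icc, interior_Icc]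
    exact (nonempty_Ioo.2 hl).prod (nonempty_Ioo.2 ht₀)
  have hC10 : 0 ≤ C1 :=
    (abs_nonneg _).trans (hC1 (0,0) (hRmem 0 0 le_rfl hl.le le_rfl ht₀.le))
  -- the scalar component and its derivative
  set ui : ℝ × ℝ → ℝ := fun q => U q i with huidef
  have hui : ContDiffOn ℝ 1 ui R :=
    (ContinuousLinearMap.proj (R := ℝ) (φ := fun _ : Fin n => ℝ) i).contDiff.comp_contDiffOn hU
  set Du : ℝ × ℝ → (ℝ × ℝ) →L[ℝ] ℝ := fun p => fderivWithin ℝ ui R p with hDudef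
  have hDuc : ContinuousOn Du R := hui.continuousOn_fderivWithin hRud le_rfl
  have hder : ∀ p ∈ R, HasFDerivWithinAt ui (Du p) R p :=
    fun p hp => ((hui.differentiableOn one_ne_zero) p hp).hasFDerivWithinAt
  have hDu10c : ContinuousOn (fun p => Du p ((1:ℝ), (0:ℝ))) R :=
    hDuc.clm_apply continuousOn_const
  -- the PDE in terms of Du
  have hpde' : ∀ p ∈ R, ∀ c : ℝ, Du p (c, 1) = G p + (c - Λ p i) * Du p ((1:ℝ), (0:ℝ)) := by
    intro p hp c
    have h1 : ((c:ℝ), (1:ℝ)) = c • ((1:ℝ), (0:ℝ)) + ((0:ℝ), (1:ℝ)) := by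
      simp [Prod.ext_iff]
    rw [h1, map_add, map_smul, smul_eq_mul]
    have := hpde p hp
    rw [hRdef, MixedRect] at this
    have h2 : Du p ((0:ℝ), (1:ℝ)) = G p - Λ p i * Du p ((1:ℝ), (0:ℝ)) := by
      rw [hDudef]
      simp only [huidef]
      rw [hRdef, MixedRect]
      linarith [this]
    rw [h2]; ring
  -- width positivity and the parametrization e
  have hwidth : ∀ t ∈ Icc (0:ℝ) t₀, 0 < l - b*t - a*t := by
    intro t ⟨h1, h2⟩; nlinarith
  set e : ℝ → ℝ → ℝ := fun t σ => a*t + σ*(l - b*t - a*t) with hedef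
  have hemem : ∀ t ∈ Icc (0:ℝ) t₀, ∀ σ ∈ Icc (0:ℝ) 1, e t σ ∈ Icc (a*t) (l - b*t) := by
    intro t ht σ ⟨h1, h2⟩
    have hw := hwidth t ht
    simp only [hedef]
    constructor
    · nlinarith [mul_nonneg h1 hw.le]
    · nlinarith [mul_le_mul_of_nonneg_right h2 hw.le]
  have hesurj : ∀ t ∈ Icc (0:ℝ) t₀, ∀ x ∈ Icc (a*t) (l - b*t),
      ∃ σ ∈ Icc (0:ℝ) 1, e t σ = x := by
    intro t ht x ⟨h1, h2⟩
    have hw := hwidth t ht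
    refine ⟨(x - a*t) / (l - b*t - a*t), ⟨div_nonneg (by linarith) hw.le, ?_⟩, ?_⟩
    · rw [div_le_one hw]; linarith
    · simp only [hedef]
      rw [div_mul_cancel₀ _ hw.ne']; ring
  have hxR : ∀ t ∈ Icc (0:ℝ) t₀, ∀ x ∈ Icc (a*t) (l - b*t), (x, t) ∈ R := by
    intro t ht x hx
    refine hRmem x t ?_ ?_ ht.1 ht.2
    · nlinarith [hx.1, ht.1]
    · nlinarith [hx.2, ht.1]
  -- the sup function φ
  set g : ℝ × ℝ → ℝ := fun q => s * U (e q.2 q.1, q.2) i with hgdef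
  have hgc : ContinuousOn g (Icc 0 1 ×ˢ Icc 0 t₀) := by
    have hm : Continuous (fun q : ℝ × ℝ => ((e q.2 q.1, q.2) : ℝ × ℝ)) := by
      apply Continuous.prodMk
      · simp only [hedef]; fun_prop
      · fun_prop
    have hmap : MapsTo (fun q : ℝ × ℝ => ((e q.2 q.1, q.2) : ℝ × ℝ))
        (Icc 0 1 ×ˢ Icc 0 t₀) R := by
      rintro ⟨σ, t⟩ ⟨hσ, ht⟩
      exact hxR t ht _ (hemem t ht σ hσ)
    have hUc : ContinuousOn (fun p => U p i) R :=
      (continuous_apply i).comp_continuousOn hU.continuousOn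
    exact continuousOn_const.mul (hUc.comp hm.continuousOn hmap)
  set φ : ℝ → ℝ := fun t => sSup ((fun σ => g (σ, t)) '' Icc (0:ℝ) 1) with hφdef
  have hφc : ContinuousOn φ (Icc 0 t₀) := contOn_sup_param hgc
  have hφub : ∀ t ∈ Icc (0:ℝ) t₀, ∀ x ∈ Icc (a*t) (l - b*t), s * U (x,t) i ≤ φ t := by
    intro t ht x hx
    obtain ⟨σ, hσ, heq⟩ := hesurj t ht x hx
    obtain ⟨σ₁, hσ₁, hval, hmax⟩ := sup_attained ht hgc
    have h5 : s * U (e t σ, t) i ≤ g (σ₁, t) := hmax σ hσ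
    rw [heq] at h5
    have h6 : φ t = g (σ₁, t) := hval
    rw [h6]
    exact h5
  have hφ0 : φ 0 ≤ B' := by
    obtain ⟨σ₁, hσ₁, hval, hmax⟩ := sup_attained (left_mem_Icc.2 ht₀.le) hgc
    have h6 : φ 0 = g (σ₁, 0) := hval
    rw [h6]
    show s * U (e 0 σ₁, 0) i ≤ B'
    refine hB0 (e 0 σ₁) ?_
    have := hemem 0 (left_mem_Icc.2 ht₀.le) σ₁ hσ₁
    simpa using this
  -- main step: the barrier argument
  have hmain : ∀ t ∈ Icc (0:ℝ) t₀, φ t ≤ B' + C1 * t := by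
    -- Step 1: slope estimate at points where φ exceeds the barrier
    have hslope : ∀ t ∈ Ico (0:ℝ) t₀, B' + C1 * t < φ t → ∀ r, C1 < r →
        ∃ᶠ z in nhdsWithin t (Ioi t), slope φ t z < r := by
      intro t ht hover r hr
      by_contra hcon
      rw [Filter.not_frequently] at hcon
      have hev2 : ∀ᶠ z in nhdsWithin t (Ioi t), z ∈ Ioo t t₀ :=
        Ioo_mem_nhdsGT_of_mem ⟨le_rfl, ht.2⟩
      obtain ⟨z, hz⟩ := Filter.exists_seq_tendsto (nhdsWithin t (Ioi t))
      have hzt : Filter.Tendsto z Filter.atTop (nhds t) := hz.mono_right nhdsWithin_le_nhds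
      have hevz : ∀ᶠ j in Filter.atTop, ¬ slope φ t (z j) < r ∧ z j ∈ Ioo t t₀ :=
        hz.eventually (hcon.and hev2)
      -- argmax selection
      have hchoice : ∀ j, ∃ σ, σ ∈ Icc (0:ℝ) 1 ∧
          (z j ∈ Icc (0:ℝ) t₀ → φ (z j) = g (σ, z j)) := by
        intro j
        by_cases hmem : z j ∈ Icc (0:ℝ) t₀
        · obtain ⟨σ, hσ, hval, _⟩ := sup_attained hmem hgc
          exact ⟨σ, hσ, fun _ => hval⟩
        · exact ⟨0, ⟨le_rfl, zero_le_one⟩, fun hmem2 => absurd hmem2 hmem⟩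
      choose σs hσsmem hσsval using hchoice
      obtain ⟨σb, hσbmem, ψ, hψ, hσconv⟩ := isCompact_Icc.tendsto_subseq hσsmem
      set w : ℕ → ℝ := fun j => z (ψ j) with hwdef
      have hwt : Filter.Tendsto w Filter.atTop (nhds t) := hzt.comp hψ.tendsto_atTop
      have hwev : ∀ᶠ j in Filter.atTop, ¬ slope φ t (w j) < r ∧ w j ∈ Ioo t t₀ :=
        hψ.tendsto_atTop.eventually hevz
      set τ : ℕ → ℝ := fun j => σs (ψ j) with hτdef
      have hτconv : Filter.Tendsto τ Filter.atTop (nhds σb) := hσconv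
      have hτmem : ∀ j, τ j ∈ Icc (0:ℝ) 1 := fun j => hσsmem (ψ j)
      set xb : ℝ := e t σb with hxbdef
      have hxbmem : xb ∈ Icc (a*t) (l - b*t) := hemem t (Ico_subset_Icc_self ht) σb hσbmem
      have hpbR : ((xb, t) : ℝ × ℝ) ∈ R := hxR t (Ico_subset_Icc_self ht) xb hxbmem
      set xs : ℕ → ℝ := fun j => e (w j) (τ j) with hxsdef
      have hxsconv : Filter.Tendsto xs Filter.atTop (nhds xb) := by
        have hE : Continuous (fun q : ℝ × ℝ => a*q.1 + q.2*(l - b*q.1 - a*q.1)) := by fun_prop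
        have h1 : Filter.Tendsto (fun j => ((w j, τ j) : ℝ × ℝ)) Filter.atTop
            (nhds ((t, σb) : ℝ × ℝ)) := hwt.prodMk_nhds hτconv
        exact ((hE.tendsto ((t, σb) : ℝ × ℝ)).comp h1 : _)
      have hwIcc : ∀ᶠ j in Filter.atTop, w j ∈ Icc (0:ℝ) t₀ := by
        filter_upwards [hwev] with j hj
        exact ⟨ht.1.trans hj.2.1.le, hj.2.2.le⟩
      -- identify the limit value
      have hval_lim : s * U (xb, t) i = φ t := by
        have h1 : Filter.Tendsto (fun j => g (τ j, w j)) Filter.atTop (nhds (g (σb, t))) := by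
          have hgct : ContinuousWithinAt g (Icc 0 1 ×ˢ Icc 0 t₀) ((σb, t) : ℝ × ℝ) :=
            hgc (σb, t) ⟨hσbmem, Ico_subset_Icc_self ht⟩
          apply hgct.tendsto.comp
          rw [tendsto_nhdsWithin_iff]
          constructor
          · exact hτconv.prodMk_nhds hwt
          · filter_upwards [hwIcc] with j hj
            exact ⟨hτmem j, hj⟩
        have h2 : Filter.Tendsto (fun j => g (τ j, w j)) Filter.atTop (nhds (φ t)) := by
          have hφct : ContinuousWithinAt φ (Icc 0 t₀) t := hφc t (Ico_subset_Icc_self ht)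
          have h3 : Filter.Tendsto w Filter.atTop (nhdsWithin t (Icc 0 t₀)) := by
            rw [tendsto_nhdsWithin_iff]; exact ⟨hwt, hwIcc⟩
          have h4 := hφct.tendsto.comp h3
          apply h4.congr'
          filter_upwards [hwIcc] with j hj
          exact hσsval (ψ j) hj
        exact tendsto_nhds_unique h1 h2
      have hover' : B' + C1 * t < s * U (xb, t) i := by rw [hval_lim]; exact hover
      obtain ⟨hleft, hright⟩ := hesc t ht xb hxbmem hover'
      set c : ℝ := Λ (xb, t) i with hcdef
      -- the error term ρ is continuous and vanishes at (xb, t)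
      set ρ : ℝ × ℝ → ℝ := fun p => |c - Λ p i| * |Du p ((1:ℝ),(0:ℝ))| with hρdef
      have hρc : ContinuousOn ρ R := ((continuousOn_const.sub hΛ).abs).mul hDu10c.abs
      set ε2 : ℝ := (r - C1)/2 with hε2def
      have hε2pos : 0 < ε2 := by simp only [hε2def]; linarith
      have hρ0 : ρ ((xb, t) : ℝ × ℝ) = 0 := by simp [hρdef, hcdef]
      obtain ⟨δ, hδpos, hδ'⟩ : ∃ δ > 0, ∀ p ∈ R, dist p ((xb, t) : ℝ × ℝ) < δ → ρ p < ε2 := by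
        have hcw := hρc (xb, t) hpbR
        rw [Metric.continuousWithinAt_iff] at hcw
        obtain ⟨δ, hδpos, hδ2⟩ := hcw ε2 hε2pos
        refine ⟨δ, hδpos, fun p hp hdist => ?_⟩
        have := hδ2 hp hdist
        rw [Real.dist_eq, hρ0, sub_zero] at this
        exact (le_abs_self _).trans_lt this
      -- eventual smallness conditions
      have hclose : ∀ᶠ j in Filter.atTop, |xs j - xb| < δ/4 := by
        have hball : ∀ᶠ y in nhds xb, y ∈ Metric.ball xb (δ/4) :=
          Metric.ball_mem_nhds xb (by positivity)
        filter_upwards [hxsconv.eventually hball] with j hj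
        rw [Metric.mem_ball, Real.dist_eq] at hj
        exact hj
      have hsmall : ∀ᶠ j in Filter.atTop, |w j - t| * (|c| + 1) < δ/4 ∧ |w j - t| < δ/2 := by
        have hpos : (0:ℝ) < min ((δ/4)/(|c|+1)) (δ/2) := by positivity
        have hball : ∀ᶠ y in nhds t, y ∈ Metric.ball t (min ((δ/4)/(|c|+1)) (δ/2)) :=
          Metric.ball_mem_nhds t hpos
        filter_upwards [hwt.eventually hball] with j hj
        rw [Metric.mem_ball, Real.dist_eq] at hj
        have h1 : |w j - t| < (δ/4)/(|c|+1) := hj.trans_le (min_le_left _ _)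
        have h2 : |w j - t| < δ/2 := hj.trans_le (min_le_right _ _)
        have h3 : (0:ℝ) < |c| + 1 := by positivity
        refine ⟨?_, h2⟩
        calc |w j - t| * (|c| + 1) < (δ/4)/(|c|+1) * (|c|+1) := by
              exact mul_lt_mul_of_pos_right h1 h3
        _ = δ/4 := by field_simp
      -- the comparison point stays in the domain at time t
      have hylow : ∀ᶠ j in Filter.atTop, a*t ≤ xs j - c*(w j - t) := by
        rcases hleft with hlt | hle
        · have h1 : Filter.Tendsto (fun j => xs j - c*(w j - t)) Filter.atTop (nhds xb) := by
            have h2 := hxsconv.sub ((hwt.sub_const t).const_mul c)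
            simpa using h2
          exact h1.eventually (eventually_ge_nhds hlt)
        · filter_upwards [hwev] with j hj
          have hw1 : w j ∈ Icc (0:ℝ) t₀ := ⟨ht.1.trans hj.2.1.le, hj.2.2.le⟩
          have h5 := (hemem (w j) hw1 (τ j) (hτmem j)).1
          linarith [h5, mul_nonneg (sub_nonneg.2 hle) (sub_nonneg.2 hj.2.1.le)]
      have hyhigh : ∀ᶠ j in Filter.atTop, xs j - c*(w j - t) ≤ l - b*t := by
        rcases hright with hlt | hle
        · have h1 : Filter.Tendsto (fun j => xs j - c*(w j - t)) Filter.atTop (nhds xb) := by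
            have h2 := hxsconv.sub ((hwt.sub_const t).const_mul c)
            simpa using h2
          exact h1.eventually (eventually_le_nhds hlt)
        · filter_upwards [hwev] with j hj
          have hw1 : w j ∈ Icc (0:ℝ) t₀ := ⟨ht.1.trans hj.2.1.le, hj.2.2.le⟩
          have h5 := (hemem (w j) hw1 (τ j) (hτmem j)).2
          linarith [h5, mul_nonneg (by linarith : (0:ℝ) ≤ b + c) (sub_nonneg.2 hj.2.1.le)]
      -- pick a good index
      obtain ⟨j, hj⟩ := (hwev.and (hclose.and (hsmall.and (hylow.and hyhigh)))).exists
      obtain ⟨⟨hjslope, hjIoo⟩, hjclose, ⟨hjsm1, hjsm2⟩, hjylow, hjyhigh⟩ := hj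
      set h : ℝ := w j - t with hhdef
      have hh : 0 < h := sub_pos.2 hjIoo.1
      have habs_h : |h| = h := abs_of_pos hh
      rw [habs_h] at hjsm1 hjsm2
      set y : ℝ := xs j - c*h with hydef
      clear_value y
      clear_value h
      have hyIcc : y ∈ Icc (a*t) (l - b*t) := ⟨hjylow, hjyhigh⟩
      have hwjIcc : w j ∈ Icc (0:ℝ) t₀ := ⟨ht.1.trans hjIoo.1.le, hjIoo.2.le⟩
      have hxsj : xs j ∈ Icc (a*(w j)) (l - b*(w j)) := hemem (w j) hwjIcc (τ j) (hτmem j)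
      have hy0 : 0 ≤ y := by linarith [hyIcc.1, mul_nonneg ha ht.1]
      have hyl : y ≤ l := by linarith [hyIcc.2, mul_nonneg hb ht.1]
      have hxs0 : 0 ≤ xs j := by linarith [hxsj.1, mul_nonneg ha hwjIcc.1]
      have hxsl : xs j ≤ l := by linarith [hxsj.2, mul_nonneg hb hwjIcc.1]
      -- the characteristic segment
      set q : ℝ → ℝ × ℝ := fun v => ((y + c*v, t + v) : ℝ × ℝ) with hqdef
      have hqR : ∀ v ∈ Icc (0:ℝ) h, q v ∈ R := by
        intro v hv
        refine hRmem (y + c*v) (t + v) ?_ ?_ (by linarith [ht.1, hv.1]) (by linarith [hjIoo.2, hv.2])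
        · rcases le_or_gt 0 c with hc | hc
          · linarith [hy0, mul_nonneg hc hv.1]
          · have hcv : c*h ≤ c*v := mul_le_mul_of_nonpos_left hv.2 hc.le
            linarith [hxs0, hcv]
        · rcases le_or_gt 0 c with hc | hc
          · have hcv : c*v ≤ c*h := mul_le_mul_of_nonneg_left hv.2 hc
            linarith [hxsl, hcv]
          · have hcv : 0 ≤ (-c)*v := mul_nonneg (by linarith) hv.1
            linarith [hyl, hcv]
      have hybx : |y - xb| < δ/2 := by
        have h1 : |y - xb| ≤ |xs j - xb| + |c| * h := by
          rw [hydef]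
          calc |xs j - c*h - xb| ≤ |xs j - xb| + |c * h| := by
                have := abs_sub (xs j - xb) (c*h)
                calc |xs j - c*h - xb| = |(xs j - xb) - c*h| := by ring_nf
                _ ≤ |xs j - xb| + |c * h| := abs_sub _ _
          _ = |xs j - xb| + |c| * h := by rw [abs_mul, abs_of_pos hh]
        have h2 : |c| * h ≤ (|c|+1)*h := by linarith [hh.le]
        linarith [h1, h2, hjclose, hjsm1]
      have hqdist : ∀ v ∈ Icc (0:ℝ) h, dist (q v) ((xb, t) : ℝ × ℝ) < δ := by
        intro v hv
        rw [Prod.dist_eq]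
        apply max_lt
        · rw [Real.dist_eq]
          have h1 : |y + c*v - xb| ≤ |y - xb| + |c| * v := by
            calc |y + c*v - xb| = |(y - xb) + c*v| := by ring_nf
            _ ≤ |y - xb| + |c * v| := abs_add_le _ _
            _ = |y - xb| + |c| * v := by rw [abs_mul, abs_of_nonneg hv.1]
          have h2 : |c| * v ≤ (|c|+1)*h := by
            have h3 : |c| * v ≤ |c| * h := mul_le_mul_of_nonneg_left hv.2 (abs_nonneg c)
            linarith [hh.le]
          linarith [h1, h2, hybx, hjsm1]
        · rw [Real.dist_eq]
          have : |t + v - t| = v := by rw [show t + v - t = v by ring, abs_of_nonneg hv.1]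
          rw [this]
          linarith [hv.2, hjsm2]
      -- derivative of the restriction to the segment
      have hγder : ∀ v ∈ Icc (0:ℝ) h,
          HasDerivWithinAt (fun v => s * ui (q v)) (s * (Du (q v) ((c, 1) : ℝ × ℝ)))
            (Icc 0 h) v := by
        intro v hv
        have hq1 : HasDerivAt (fun v : ℝ => y + c*v) c v := by
          simpa using ((hasDerivAt_id v).const_mul c).const_add y
        have hq2 : HasDerivAt (fun v : ℝ => t + v) 1 v := by
          simpa using (hasDerivAt_id v).const_add t
        have hq3 : HasDerivAt q ((c, 1) : ℝ × ℝ) v := hq1.prodMk hq2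
        have h3 := (hder (q v) (hqR v hv)).comp_hasDerivWithinAt v hq3.hasDerivWithinAt
          (fun u hu => hqR u hu)
        exact h3.const_mul s
      have hγbound : ∀ v ∈ Icc (0:ℝ) h, ‖s * (Du (q v) ((c, 1) : ℝ × ℝ))‖ ≤ C1 + ε2 := by
        intro v hv
        have hqvR := hqR v hv
        rw [Real.norm_eq_abs, abs_mul, hsabs, one_mul, hpde' (q v) hqvR c]
        calc |G (q v) + (c - Λ (q v) i) * Du (q v) ((1:ℝ),(0:ℝ))|
            ≤ |G (q v)| + |(c - Λ (q v) i) * Du (q v) ((1:ℝ),(0:ℝ))| := abs_add_le _ _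
        _ = |G (q v)| + |c - Λ (q v) i| * |Du (q v) ((1:ℝ),(0:ℝ))| := by rw [abs_mul]
        _ ≤ C1 + ε2 := add_le_add (hC1 _ hqvR) (le_of_lt (hδ' (q v) hqvR (hqdist v hv)))
      have hMVT := norm_image_sub_le_of_norm_deriv_le_segment' hγder
        (fun v hv => hγbound v (Ico_subset_Icc_self hv)) h (right_mem_Icc.2 hh.le)
      -- identify endpoints
      have hqh : q h = ((xs j, w j) : ℝ × ℝ) := by
        simp only [hqdef, Prod.mk.injEq, hydef, hhdef]
        constructor <;> ring
      have hq0 : q 0 = ((y, t) : ℝ × ℝ) := by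
        simp only [hqdef, Prod.mk.injEq]
        constructor <;> ring
      have hφwj : φ (w j) = s * ui (q h) := by
        rw [hqh]
        exact hσsval (ψ j) hwjIcc
      have hq0le : s * ui (q 0) ≤ φ t := by
        rw [hq0]
        exact hφub t (Ico_subset_Icc_self ht) y hyIcc
      have hseg : s * ui (q h) - s * ui (q 0) ≤ (C1 + ε2) * h := by
        have h1 := hMVT
        rw [Real.norm_eq_abs] at h1
        have h2 := (le_abs_self (s * ui (q h) - s * ui (q 0))).trans h1
        linarith [h2]
      have hcontra : slope φ t (w j) < r := by
        rw [slope_def_field, div_lt_iff₀ (by linarith : (0:ℝ) < w j - t)]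
        have h6 : φ (w j) - φ t ≤ (C1 + ε2) * h := by
          rw [hφwj]; linarith [hq0le, hseg]
        have h7 : (C1 + ε2) * h < r * (w j - t) := by
          rw [show w j - t = h from hhdef.symm]
          have h8 : C1 + ε2 < r := by simp only [hε2def]; linarith
          have h9 := mul_pos (show (0:ℝ) < r - (C1 + ε2) by linarith) hh
          linarith [h9]
        linarith
      exact hjslope hcontra
    -- Step 2: barrier argument
    intro t ht
    have hεbound : ∀ ε > (0:ℝ), φ t ≤ B' + C1*t + ε*(1+t) := by
      intro ε hε
      set lin : ℝ → ℝ := fun u => B' + ε/2 + C1*u with hlindef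
      set f : ℝ → ℝ := fun u => max (φ u) (lin u) with hfdef
      have hlinc : ContinuousOn lin (Icc 0 t₀) := by simp only [hlindef]; fun_prop
      have hfc : ContinuousOn f (Icc 0 t₀) := by
        have := hφc.sup hlinc
        exact this
      have hbar : ∀ u ∈ Icc (0:ℝ) t₀, f u ≤ B' + ε + (C1+ε)*u := by
        intro u hu
        refine image_le_of_liminf_slope_right_lt_deriv_boundary'
          (f := f) (f' := fun _ => C1) (B := fun u => B' + ε + (C1+ε)*u)
          (B' := fun _ => C1 + ε) hfc ?_ ?_ ?_ ?_ ?_ hu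
        · -- liminf slope bound
          intro x hx r hr
          rcases lt_or_ge (φ x) (lin x) with hcase | hcase
          · have hev : ∀ᶠ z in nhdsWithin x (Ioi x), φ z < lin z := by
              have h1 : ContinuousWithinAt (fun u => φ u - lin u) (Icc 0 t₀) x :=
                (hφc x (Ico_subset_Icc_self hx)).sub (hlinc x (Ico_subset_Icc_self hx))
              have h2 : ∀ᶠ z in nhdsWithin x (Icc 0 t₀), φ z - lin z < 0 :=
                h1.tendsto.eventually (eventually_lt_nhds (by linarith : φ x - lin x < 0))
              have hle : nhdsWithin x (Ioi x) ≤ nhdsWithin x (Icc 0 t₀) := by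
                rw [← nhdsWithin_Ioc_eq_nhdsGT hx.2]
                exact nhdsWithin_mono _ (fun z hz => ⟨hx.1.trans hz.1.le, hz.2⟩)
              exact (h2.filter_mono hle).mono (fun z hz => by linarith)
            have hself : ∀ᶠ z in nhdsWithin x (Ioi x), z ∈ Ioi x := self_mem_nhdsWithin
            refine ((hev.and hself).mono ?_).frequently
            rintro z ⟨hz1, hz2⟩
            have hfz : f z = lin z := max_eq_right hz1.le
            have hfx : f x = lin x := max_eq_right hcase.le
            have hzx : 0 < z - x := sub_pos.2 hz2
            rw [slope_def_field, hfz, hfx, div_lt_iff₀ hzx]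
            simp only [hlindef]
            nlinarith [mul_pos (sub_pos.2 hr) hzx]
          · have hover : B' + C1*x < φ x := by
              simp only [hlindef] at hcase; linarith
            have hfreq := hslope x hx hover r hr
            have hself : ∀ᶠ z in nhdsWithin x (Ioi x), z ∈ Ioi x := self_mem_nhdsWithin
            refine (hfreq.and_eventually hself).mono ?_
            rintro z ⟨hz1, hz2⟩
            have hfx : f x = φ x := max_eq_left hcase
            have hzx : 0 < z - x := sub_pos.2 hz2
            rw [slope_def_field, div_lt_iff₀ hzx] at hz1 ⊢
            have h1 : φ z - f x < r * (z-x) := by rw [hfx]; linarith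
            have h2 : lin z - f x < r * (z-x) := by
              rw [hfx]
              simp only [hlindef] at hcase ⊢
              nlinarith [mul_pos (sub_pos.2 hr) hzx]
            rcases le_total (φ z) (lin z) with hc2 | hc2
            · rw [show f z = lin z from max_eq_right hc2]; exact h2
            · rw [show f z = max (φ z) (lin z) from rfl, max_eq_left hc2]; exact h1
        · -- initial condition
          show max (φ 0) (lin 0) ≤ B' + ε + (C1+ε)*0
          apply max_le
          · nlinarith [hφ0]
          · simp only [hlindef]; nlinarith
        · fun_prop
        · intro x _
          have h1 : HasDerivAt (fun u : ℝ => B' + ε + (C1+ε)*u) (C1+ε) x := by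
            simpa using ((hasDerivAt_id x).const_mul (C1+ε)).const_add (B' + ε)
          exact h1.hasDerivWithinAt
        · intro x _ _
          show C1 < C1 + ε
          linarith
      have h1 := hbar t ht
      have h2 : φ t ≤ f t := le_max_left _ _
      nlinarith [h1, h2]
    by_contra hcon
    push_neg at hcon
    have h1pos : (0:ℝ) < 1 + t := by linarith [ht.1]
    have hd : 0 < φ t - (B' + C1*t) := by linarith
    have h2 := hεbound ((φ t - (B' + C1*t))/(2*(1+t))) (by positivity)
    have h3 : (φ t - (B' + C1*t))/(2*(1+t))*(1+t) = (φ t - (B' + C1*t))/2 := by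
      field_simp
    nlinarith [h2, h3, hd]
  intro t ht x hx
  exact (hφub t ht x hx).trans (hmain t ht)


/-- Local a priori sup-norm estimate for the semilinear hyperbolic mixed
problem. With continuous data, hyperbolicity and the Lipschitz hypotheses, set
`q₀ = n L_F (1 + n L_H)`; let `t₀ > 0` satisfy `q₀ t₀ < 1` and
`t₀ · max_i sup |Λ_i| < l` (the sup over `[0,l] × [0,t₀]` being encoded through an
upper bound `MΛ`). Then every `C¹` solution `U` of the mixed problem on
`[0,l] × [0,t₀]` satisfies, for any upper bounds `MA, MF0, MH0` of
`max_i sup |A_i|`, `max_i sup |F_i(·,·,0)|`, `max_i sup |H_i(·,0)|` respectively,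
`max_i sup |U_i| ≤ (1/(1 − q₀t₀)) ((MA + t₀ MF0)(1 + n L_H) + MH0)`. -/

theorem statement4
    (n k : ℕ) (hn : 1 ≤ n) (hk : 1 ≤ k) (hkn : k ≤ n)
    (l t₀ : ℝ) (hl : 0 < l) (ht₀ : 0 < t₀)
    (Λ : ℝ × ℝ → Fin n → ℝ) (F : ℝ × ℝ → (Fin n → ℝ) → Fin n → ℝ)
    (A : ℝ → Fin n → ℝ) (H : ℝ → (Fin n → ℝ) → Fin n → ℝ)
    (hΛ : ContinuousOn Λ (MixedRect l t₀))
    (hF : ContinuousOn (fun q : (ℝ × ℝ) × (Fin n → ℝ) => F q.1 q.2)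
      (MixedRect l t₀ ×ˢ (Set.univ : Set (Fin n → ℝ))))
    (hH : ContinuousOn (fun q : ℝ × (Fin n → ℝ) => H q.1 q.2)
      (Set.Icc (0 : ℝ) t₀ ×ˢ (Set.univ : Set (Fin n → ℝ))))
    (hA : ContinuousOn A (Set.Icc 0 l))
    (hhyp : HyperbolicOn n k Λ (MixedRect l t₀))
    (LF LH : ℝ) (hLF : 0 ≤ LF) (hLH : 0 ≤ LH)
    (hLipF : LipschitzFOn n F (MixedRect l t₀) LF)
    (hLipH : LipschitzHOn n H t₀ LH)
    (hq₀ : (n : ℝ) * LF * (1 + n * LH) * t₀ < 1)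
    (MΛ : ℝ) (hMΛ : ∀ p ∈ MixedRect l t₀, ∀ i : Fin n, |Λ p i| ≤ MΛ)
    (hMΛl : t₀ * MΛ < l) :
    ∀ U : ℝ × ℝ → Fin n → ℝ,
      ContDiffOn ℝ 1 U (MixedRect l t₀) →
      IsMixedSolution n k l t₀ Λ F A H U →
      ∀ MA MF0 MH0 : ℝ,
        (∀ x ∈ Set.Icc (0 : ℝ) l, ∀ i : Fin n, |A x i| ≤ MA) →
        (∀ p ∈ MixedRect l t₀, ∀ i : Fin n, |F p 0 i| ≤ MF0) →
        (∀ t ∈ Set.Icc (0 : ℝ) t₀, ∀ i : Fin n, |H t 0 i| ≤ MH0) →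
        ∀ p ∈ MixedRect l t₀, ∀ i : Fin n,
          |U p i| ≤ (1 / (1 - (n : ℝ) * LF * (1 + n * LH) * t₀)) *
            ((MA + t₀ * MF0) * (1 + n * LH) + MH0) := by
  intro U hU hsol MA MF0 MH0 hMA hMF0 hMH0
  obtain ⟨hpde, hinit, hbdry⟩ := hsol
  haveI hFin : Nonempty (Fin n) := ⟨⟨0, hn⟩⟩
  have h00R : ((0,0) : ℝ × ℝ) ∈ MixedRect l t₀ := ⟨⟨le_rfl, hl.le⟩, ⟨le_rfl, ht₀.le⟩⟩
  have hMA0 : 0 ≤ MA := (abs_nonneg _).trans (hMA 0 ⟨le_rfl, hl.le⟩ ⟨0, hn⟩)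
  have hMF00 : 0 ≤ MF0 := (abs_nonneg _).trans (hMF0 (0,0) h00R ⟨0, hn⟩)
  have hMH00 : 0 ≤ MH0 := (abs_nonneg _).trans (hMH0 0 ⟨le_rfl, ht₀.le⟩ ⟨0, hn⟩)
  have hMΛ0 : 0 ≤ MΛ := (abs_nonneg _).trans (hMΛ (0,0) h00R ⟨0, hn⟩)
  have hsle : ∀ s : ℝ, s = 1 ∨ s = -1 → ∀ v : ℝ, s * v ≤ |v| := by
    intro s hs v
    rcases hs with h | h <;> rw [h]
    · rw [one_mul]; exact le_abs_self v
    · rw [neg_one_mul]; exact neg_le_abs v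
  have hRc : IsCompact (MixedRect l t₀) := isCompact_Icc.prod isCompact_Icc
  have hRne : (MixedRect l t₀).Nonempty := ⟨(0,0), h00R⟩
  -- global maximum of |U|
  have hUic : ∀ i : Fin n, ContinuousOn (fun p => |U p i|) (MixedRect l t₀) := fun i =>
    ((continuous_apply i).comp_continuousOn hU.continuousOn).abs
  have hattain : ∀ i : Fin n, ∃ p, p ∈ MixedRect l t₀ ∧ ∀ q ∈ MixedRect l t₀,
      |U q i| ≤ |U p i| := by
    intro i
    obtain ⟨p, hp, _, hmax⟩ := hRc.exists_sSup_image_eq_and_ge hRne (hUic i)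
    exact ⟨p, hp, hmax⟩
  choose pm hpmR hpmmax using hattain
  set M : ℝ := Finset.univ.sup' Finset.univ_nonempty (fun i => |U (pm i) i|) with hMdef
  have hUM : ∀ p ∈ MixedRect l t₀, ∀ i : Fin n, |U p i| ≤ M := fun p hp i =>
    (hpmmax i p hp).trans (Finset.le_sup' (fun i => |U (pm i) i|) (Finset.mem_univ i))
  have hM0 : 0 ≤ M := (abs_nonneg _).trans (hUM (0,0) h00R ⟨0, hn⟩)
  obtain ⟨i0, _, hMeq⟩ :=
    Finset.exists_mem_eq_sup' (Finset.univ_nonempty (α := Fin n)) (fun i => |U (pm i) i|)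
  -- the constant C1
  set C1 : ℝ := MF0 + LF * ((n:ℝ) * M) with hC1def
  have hC10 : 0 ≤ C1 := by positivity
  have hGbound : ∀ i : Fin n, ∀ p ∈ MixedRect l t₀, |F p (U p) i| ≤ C1 := by
    intro i p hp
    have h1 : |F p (U p) i - F p 0 i| ≤ LF * ∑ j, |U p j - (0 : Fin n → ℝ) j| :=
      hLipF p hp i (U p) 0
    have h2 : ∑ j, |U p j - (0 : Fin n → ℝ) j| ≤ (n : ℝ) * M := by
      calc ∑ j, |U p j - (0 : Fin n → ℝ) j| = ∑ j : Fin n, |U p j| := by simp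
      _ ≤ ∑ _j : Fin n, M := Finset.sum_le_sum (fun j _ => hUM p hp j)
      _ = (n : ℝ) * M := by simp [Finset.sum_const, Finset.card_univ, nsmul_eq_mul]
    have h3 := hMF0 p hp i
    have h4 : |F p (U p) i| ≤ |F p (U p) i - F p 0 i| + |F p 0 i| := by
      calc |F p (U p) i| = |(F p (U p) i - F p 0 i) + F p 0 i| := by ring_nf
      _ ≤ |F p (U p) i - F p 0 i| + |F p 0 i| := abs_add_le _ _
    have h5 : LF * ∑ j, |U p j - (0 : Fin n → ℝ) j| ≤ LF * ((n:ℝ) * M) :=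
      mul_le_mul_of_nonneg_left h2 hLF
    rw [hC1def]
    linarith
  -- common ingredients
  have hΛi : ∀ i : Fin n, ContinuousOn (fun p => Λ p i) (MixedRect l t₀) := fun i =>
    (continuous_apply i).comp_continuousOn hΛ
  have hpdei : ∀ i : Fin n, ∀ p ∈ MixedRect l t₀,
      fderivWithin ℝ (fun q => U q i) (MixedRect l t₀) p (0, 1)
        + Λ p i * fderivWithin ℝ (fun q => U q i) (MixedRect l t₀) p (1, 0)
        = (fun p => F p (U p) i) p := fun i p hp => hpde p hp i
  have hB0MA : ∀ (i : Fin n) (s : ℝ), s = 1 ∨ s = -1 →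
      ∀ x ∈ Icc (0:ℝ) l, s * U (x, 0) i ≤ MA := by
    intro i s hs x hx
    rw [hinit x hx i]
    exact (hsle s hs _).trans (hMA x hx i)
  -- key estimate, instantiation 1 : outgoing components at x = 0 (i < k)
  have hkey1 : ∀ i : Fin n, (i:ℕ) < k → ∀ s : ℝ, s = 1 ∨ s = -1 →
      ∀ t ∈ Icc (0:ℝ) t₀, ∀ x ∈ Icc (0*t) (l - MΛ*t), s * U (x,t) i ≤ MA + C1 * t := by
    intro i hik s hs
    apply key_estimate n l t₀ hl ht₀ U Λ (fun p => F p (U p) i) i s hs hU (hΛi i) (hpdei i)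
      0 MΛ le_rfl hMΛ0 (by rw [zero_mul, zero_add, mul_comm]; exact hMΛl)
      C1 (hGbound i) MA (hB0MA i s hs)
    intro t ht x hx _
    have hmem : ((x, t) : ℝ × ℝ) ∈ MixedRect l t₀ := by
      refine ⟨⟨?_, ?_⟩, ⟨ht.1, ht.2.le⟩⟩
      · linarith [hx.1]
      · have h2 := mul_nonneg hMΛ0 ht.1
        linarith [hx.2]
    refine ⟨Or.inr ((hhyp (x,t) hmem i).1 hik).le, Or.inr ?_⟩
    have h3 := hMΛ (x,t) hmem i
    linarith [neg_le_abs (Λ (x,t) i)]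
  -- key estimate, instantiation 2 : outgoing components at x = l (k ≤ i)
  have hkey2 : ∀ i : Fin n, k ≤ (i:ℕ) → ∀ s : ℝ, s = 1 ∨ s = -1 →
      ∀ t ∈ Icc (0:ℝ) t₀, ∀ x ∈ Icc (MΛ*t) (l - 0*t), s * U (x,t) i ≤ MA + C1 * t := by
    intro i hik s hs
    apply key_estimate n l t₀ hl ht₀ U Λ (fun p => F p (U p) i) i s hs hU (hΛi i) (hpdei i)
      MΛ 0 hMΛ0 le_rfl (by rw [zero_mul, add_zero, mul_comm]; exact hMΛl)
      C1 (hGbound i) MA (hB0MA i s hs)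
    intro t ht x hx _
    have hmem : ((x, t) : ℝ × ℝ) ∈ MixedRect l t₀ := by
      refine ⟨⟨?_, ?_⟩, ⟨ht.1, ht.2.le⟩⟩
      · have h2 := mul_nonneg hMΛ0 ht.1
        linarith [hx.1]
      · linarith [hx.2]
    refine ⟨Or.inr ?_, Or.inr ?_⟩
    · have h3 := hMΛ (x,t) hmem i
      linarith [le_abs_self (Λ (x,t) i)]
    · linarith [(hhyp (x,t) hmem i).2 hik]
  -- bound on the boundary trace
  have hV : ∀ t ∈ Icc (0:ℝ) t₀, ∀ j : Fin n, |bTrace n k l U t j| ≤ MA + C1 * t₀ := by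
    intro t ht j
    have hC1t : C1 * t ≤ C1 * t₀ := mul_le_mul_of_nonneg_left ht.2 hC10
    have hMΛtt : MΛ * t ≤ MΛ * t₀ := mul_le_mul_of_nonneg_left ht.2 hMΛ0
    have hMΛc : MΛ * t₀ = t₀ * MΛ := mul_comm _ _
    by_cases hjk : (j:ℕ) < k
    · have hmem0 : (0:ℝ) ∈ Icc (0*t) (l - MΛ*t) := by
        constructor
        · simp
        · linarith [hMΛl]
      have hp := hkey1 j hjk 1 (Or.inl rfl) t ht 0 hmem0
      have hm := hkey1 j hjk (-1) (Or.inr rfl) t ht 0 hmem0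
      have hbt : bTrace n k l U t j = U (0, t) j := by simp [bTrace, hjk]
      rw [hbt, abs_le]
      constructor
      · linarith [hm]
      · linarith [hp]
    · have hmeml : l ∈ Icc (MΛ*t) (l - 0*t) := by
        constructor
        · linarith [hMΛl]
        · linarith
      have hki : k ≤ (j:ℕ) := le_of_not_gt hjk
      have hp := hkey2 j hki 1 (Or.inl rfl) t ht l hmeml
      have hm := hkey2 j hki (-1) (Or.inr rfl) t ht l hmeml
      have hbt : bTrace n k l U t j = U (l, t) j := by simp [bTrace, hjk]
      rw [hbt, abs_le]
      constructor
      · linarith [hm]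
      · linarith [hp]
  have hP0 : 0 ≤ MA + C1 * t₀ := add_nonneg hMA0 (mul_nonneg hC10 ht₀.le)
  -- bound on the boundary data
  have hHb : ∀ t ∈ Icc (0:ℝ) t₀, ∀ i : Fin n,
      |H t (bTrace n k l U t) i| ≤ MH0 + LH * ((n:ℝ) * (MA + C1 * t₀)) := by
    intro t ht i
    have h1 : |H t (bTrace n k l U t) i - H t 0 i| ≤
        LH * ∑ j, |bTrace n k l U t j - (0 : Fin n → ℝ) j| := hLipH t ht i _ 0
    have h2 : ∑ j, |bTrace n k l U t j - (0 : Fin n → ℝ) j| ≤ (n:ℝ) * (MA + C1 * t₀) := by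
      calc ∑ j, |bTrace n k l U t j - (0 : Fin n → ℝ) j|
          = ∑ j : Fin n, |bTrace n k l U t j| := by simp
      _ ≤ ∑ _j : Fin n, (MA + C1 * t₀) := Finset.sum_le_sum (fun j _ => hV t ht j)
      _ = (n:ℝ) * (MA + C1 * t₀) := by
            simp only [Finset.sum_const, Finset.card_univ, nsmul_eq_mul, Fintype.card_fin]
    have h3 := hMH0 t ht i
    have h4 : |H t (bTrace n k l U t) i| ≤
        |H t (bTrace n k l U t) i - H t 0 i| + |H t 0 i| := by
      calc |H t (bTrace n k l U t) i|
          = |(H t (bTrace n k l U t) i - H t 0 i) + H t 0 i| := by ring_nf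
      _ ≤ |H t (bTrace n k l U t) i - H t 0 i| + |H t 0 i| := abs_add_le _ _
    have h5 : LH * ∑ j, |bTrace n k l U t j - (0 : Fin n → ℝ) j|
        ≤ LH * ((n:ℝ) * (MA + C1 * t₀)) := mul_le_mul_of_nonneg_left h2 hLH
    linarith
  -- key estimate, instantiation 3 : all components on the full domain
  set B3 : ℝ := max MA (MH0 + LH * ((n:ℝ) * (MA + C1 * t₀))) with hB3def
  have hMAB3 : MA ≤ B3 := le_max_left _ _
  have hHB3 : MH0 + LH * ((n:ℝ) * (MA + C1 * t₀)) ≤ B3 := le_max_right _ _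
  have hkey3 : ∀ i : Fin n, ∀ s : ℝ, s = 1 ∨ s = -1 →
      ∀ t ∈ Icc (0:ℝ) t₀, ∀ x ∈ Icc (0*t) (l - 0*t), s * U (x,t) i ≤ B3 + C1 * t := by
    intro i s hs
    apply key_estimate n l t₀ hl ht₀ U Λ (fun p => F p (U p) i) i s hs hU (hΛi i) (hpdei i)
      0 0 le_rfl le_rfl (by rw [zero_mul, add_zero]; exact hl)
      C1 (hGbound i) B3 (fun x hx => (hB0MA i s hs x hx).trans hMAB3)
    intro t ht x hx hover
    have hmem : ((x, t) : ℝ × ℝ) ∈ MixedRect l t₀ := by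
      refine ⟨⟨?_, ?_⟩, ⟨ht.1, ht.2.le⟩⟩
      · linarith [hx.1]
      · linarith [hx.2]
    have htIcc : t ∈ Icc (0:ℝ) t₀ := ⟨ht.1, ht.2.le⟩
    have hub : s * U (x, t) i ≤ |U (x,t) i| := hsle s hs _
    have hC1t0 : 0 ≤ C1 * t := mul_nonneg hC10 ht.1
    constructor
    · by_cases hik : (i:ℕ) < k
      · exact Or.inr ((hhyp (x,t) hmem i).1 hik).le
      · left
        rcases eq_or_lt_of_le hx.1 with heq | hlt
        · exfalso
          have hx0 : x = 0 := by linarith [heq]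
          have hbd := (hbdry t htIcc i).1 (le_of_not_gt hik)
          rw [hx0] at hub hover
          rw [hbd] at hub hover
          have h6 := hHb t htIcc i
          linarith
        · exact hlt
    · by_cases hik : (i:ℕ) < k
      · left
        rcases eq_or_lt_of_le hx.2 with heq | hlt
        · exfalso
          have hxl : x = l := by linarith [heq]
          have hbd := (hbdry t htIcc i).2 hik
          rw [hxl] at hub hover
          rw [hbd] at hub hover
          have h6 := hHb t htIcc i
          linarith
        · exact hlt
      · exact Or.inr (by linarith [(hhyp (x,t) hmem i).2 (le_of_not_gt hik)])
  -- conclude : bound on M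
  have hMle : M ≤ B3 + C1 * t₀ := by
    have hp0R := hpmR i0
    obtain ⟨hx0l, ht00⟩ := hp0R
    have hmem : (pm i0).1 ∈ Icc (0*(pm i0).2) (l - 0*(pm i0).2) := by
      constructor
      · linarith [hx0l.1]
      · linarith [hx0l.2]
    have hp := hkey3 i0 1 (Or.inl rfl) (pm i0).2 ht00 (pm i0).1 hmem
    have hm := hkey3 i0 (-1) (Or.inr rfl) (pm i0).2 ht00 (pm i0).1 hmem
    rw [Prod.mk.eta] at hp hm
    have hC1t : C1 * (pm i0).2 ≤ C1 * t₀ := mul_le_mul_of_nonneg_left ht00.2 hC10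
    have hMeq' : M = |U (pm i0) i0| := hMdef.trans hMeq
    rw [hMeq', abs_le]
    constructor
    · linarith [hm]
    · linarith [hp]
  -- final algebra
  set q0 : ℝ := (n:ℝ) * LF * (1 + (n:ℝ) * LH) with hq0def
  have hq01 : q0 * t₀ < 1 := hq₀
  have hC0 : M ≤ (MA + t₀*MF0)*(1 + (n:ℝ)*LH) + MH0 + q0 * t₀ * M := by
    have hLHn : 0 ≤ LH * ((n:ℝ) * (MA + C1 * t₀)) :=
      mul_nonneg hLH (mul_nonneg (Nat.cast_nonneg n) hP0)
    have hB3le : B3 ≤ MA + MH0 + LH * ((n:ℝ) * (MA + C1 * t₀)) := by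
      rw [hB3def]
      apply max_le
      · linarith
      · linarith
    have hring : MA + MH0 + LH * ((n:ℝ) * (MA + C1 * t₀)) + C1 * t₀
        = (MA + t₀*MF0)*(1 + (n:ℝ)*LH) + MH0 + q0 * t₀ * M := by
      rw [hC1def, hq0def]; ring
    linarith [hMle, hB3le]
  have hdenpos : 0 < 1 - q0 * t₀ := by linarith
  have hfinal : M ≤ (1/(1 - q0*t₀)) * ((MA + t₀*MF0)*(1 + (n:ℝ)*LH) + MH0) := by
    have h1 : M * (1 - q0*t₀) ≤ (MA + t₀*MF0)*(1 + (n:ℝ)*LH) + MH0 := by nlinarith [hC0]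
    calc M = M * (1 - q0*t₀) * (1/(1 - q0*t₀)) := by field_simp
    _ ≤ ((MA + t₀*MF0)*(1 + (n:ℝ)*LH) + MH0) * (1/(1 - q0*t₀)) :=
        mul_le_mul_of_nonneg_right h1 (by positivity)
    _ = (1/(1 - q0*t₀)) * ((MA + t₀*MF0)*(1 + (n:ℝ)*LH) + MH0) := mul_comm _ _
  intro p hp i
  exact (hUM p hp i).trans hfinal
end
end

section
/- Local stability of the semilinear hyperbolic mixed problem under perturbation of the data: Suppose Λ, F, H, A are continuous, the hyperbolicity condition holds, and the Lipschitz hypotheses hold with constants L_F, L_H ≥ 0. Set q₀ = n·L_F·(1 + n·L_H) and let t₀ > 0 satisfy q₀·t₀ < 1 and t₀ · max_{1≤i≤n} sup_{[0,l]×[0,t₀]} |Λ_i| < l. Let M¹ : [0,l]×[0,t₀] → ℝⁿ, M² : [0,l] → ℝⁿ, M³ : [0,t₀] → ℝⁿ be continuous. Suppose W is a continuously differentiable solution of the mixed problem on [0,l]×[0,t₀], and U is a continuously differentiable function satisfying the perturbed problem: ∂_t U_i + Λ_i ∂_x U_i = F_i(x,t,U) + M¹_i(x,t) on [0,l]×[0,t₀],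 U(x,0) = A(x) + M²(x), and the boundary conditions (iii) with right-hand sides H_i(t,V(t)) + M³_i(t). Then max_{1≤i≤n} sup_{[0,l]×[0,t₀]} |U_i − W_i| ≤ (1/(1 − q₀t₀)) · [ ( max_i sup_x |M²_i(x)| + t₀ · max_i sup_{(x,t)} |M¹_i(x,t)| ) · (1 + n·L_H) + max_i sup_t |M³_i(t)| ]. -/
open Set

set_option maxHeartbeats 1000000

noncomputable section

lemma mem_mixedRect' {l T : ℝ} {p : ℝ × ℝ} :
    p ∈ MixedRect l T ↔ (0 ≤ p.1 ∧ p.1 ≤ l) ∧ (0 ≤ p.2 ∧ p.2 ≤ T) := by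
  rw [MixedRect, Set.mem_prod, Set.mem_Icc, Set.mem_Icc]

lemma mixedRect_mk_mem {l T x t : ℝ} (h1 : 0 ≤ x) (h2 : x ≤ l) (h3 : 0 ≤ t) (h4 : t ≤ T) :
    ((x, t) : ℝ × ℝ) ∈ MixedRect l T :=
  mem_mixedRect'.mpr ⟨⟨h1, h2⟩, h3, h4⟩

lemma pair_sub_smul (p : ℝ × ℝ) (ε a b : ℝ) :
    p - ε • ((a, b) : ℝ × ℝ) = (p.1 - ε * a, p.2 - ε * b) := by
  simp [Prod.ext_iff, smul_eq_mul]

lemma key_max (l t₀ : ℝ) (S : Set (ℝ × ℝ)) (hS : IsCompact S) (hSne : S.Nonempty)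
    (hSsub : S ⊆ MixedRect l t₀)
    (g lam : ℝ × ℝ → ℝ) (Exit : ℝ × ℝ → Prop)
    (hgc : ContinuousOn g S)
    (c b η : ℝ) (hc : 0 ≤ c) (hη : 0 < η)
    (hder : ∀ p ∈ S, 0 < p.2 → ¬ Exit p →
      ∃ L : (ℝ × ℝ) →L[ℝ] ℝ, HasFDerivWithinAt g L (MixedRect l t₀) p ∧ |L (lam p, 1)| ≤ c)
    (hinv : ∀ p ∈ S, 0 < p.2 → ¬ Exit p →
      ∃ ε₀ > 0, ∀ ε : ℝ, 0 < ε → ε ≤ ε₀ → p - ε • ((lam p, 1) : ℝ × ℝ) ∈ S)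
    (hexit : ∀ p ∈ S, (p.2 = 0 ∨ Exit p) → |g p| ≤ b) :
    ∀ p ∈ S, |g p| ≤ b + (c + η) * p.2 := by
  classical
  have hΦc : ContinuousOn (fun q : ℝ × ℝ => |g q| - (c + η) * q.2) S :=
    hgc.abs.sub (continuousOn_const.mul continuous_snd.continuousOn)
  obtain ⟨ps, hpsS, hmax⟩ := hS.exists_isMaxOn hSne hΦc
  have hmax' : ∀ q ∈ S, |g q| - (c + η) * q.2 ≤ |g ps| - (c + η) * ps.2 := fun q hq => hmax hq
  have hps0 : 0 ≤ ps.2 := (mem_mixedRect'.mp (hSsub hpsS)).2.1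
  by_cases hcase : ps.2 = 0 ∨ Exit ps
  · intro p hp
    have h1 := hexit ps hpsS hcase
    have h2 := hmax' p hp
    have h3 : 0 ≤ (c + η) * ps.2 := mul_nonneg (by linarith) hps0
    linarith
  · exfalso
    push_neg at hcase
    have hps2 : 0 < ps.2 := lt_of_le_of_ne hps0 (Ne.symm hcase.1)
    obtain ⟨L, hL, hLb⟩ := hder ps hpsS hps2 hcase.2
    obtain ⟨ε₀, hε₀, hinv'⟩ := hinv ps hpsS hps2 hcase.2
    set u : ℝ × ℝ := (lam ps, 1) with hu
    have hune : (1 : ℝ) ≤ ‖u‖ := by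
      have h := norm_snd_le u
      simpa [hu] using h
    have hupos : (0 : ℝ) < ‖u‖ := by linarith
    have hδpos : 0 < η / (2 * ‖u‖) := by positivity
    have hL' := hasFDerivWithinAt_iff_isLittleO.mp hL
    have hlittle := hL'.def hδpos
    have htend : Filter.Tendsto (fun ε : ℝ => ps - ε • u) (nhdsWithin 0 (Set.Ioi 0))
        (nhdsWithin ps (MixedRect l t₀)) := by
      rw [tendsto_nhdsWithin_iff]
      constructor
      · have hcont : Continuous (fun ε : ℝ => ps - ε • u) :=
          continuous_const.sub (continuous_id.smul continuous_const)
        have h0 := hcont.tendsto 0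
        simp only [zero_smul, sub_zero] at h0
        exact h0.mono_left nhdsWithin_le_nhds
      · have hm : Set.Ioc (0 : ℝ) ε₀ ∈ nhdsWithin (0 : ℝ) (Set.Ioi 0) :=
          Ioc_mem_nhdsGT_of_mem ⟨le_rfl, hε₀⟩
        filter_upwards [hm] with ε hε
        exact hSsub (hinv' ε hε.1 hε.2)
    have hevS : ∀ᶠ ε : ℝ in nhdsWithin (0 : ℝ) (Set.Ioi 0), ε ∈ Set.Ioc (0 : ℝ) ε₀ := by
      have hm : Set.Ioc (0 : ℝ) ε₀ ∈ nhdsWithin (0 : ℝ) (Set.Ioi 0) :=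
        Ioc_mem_nhdsGT_of_mem ⟨le_rfl, hε₀⟩
      filter_upwards [hm] with ε hε
      exact hε
    obtain ⟨ε, hlo, hIoc⟩ := ((htend.eventually hlittle).and hevS).exists
    set q : ℝ × ℝ := ps - ε • u with hq
    have hqS : q ∈ S := hinv' ε hIoc.1 hIoc.2
    have hq2 : q.2 = ps.2 - ε := by simp [hq, hu]
    have harg : q - ps = -(ε • u) := by simp [hq]
    have hLval : L (q - ps) = -(ε * L u) := by
      rw [harg, map_neg, map_smul]; simp
    have hnq : ‖q - ps‖ = ε * ‖u‖ := by
      rw [harg, norm_neg, norm_smul, Real.norm_eq_abs, abs_of_pos hIoc.1]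
    have hbound : |g q - g ps + ε * L u| ≤ ε * (η / 2) := by
      have heq : η / (2 * ‖u‖) * (ε * ‖u‖) = ε * (η / 2) := by
        field_simp
      calc |g q - g ps + ε * L u| = ‖g q - g ps - L (q - ps)‖ := by
            rw [hLval, sub_neg_eq_add, Real.norm_eq_abs]
        _ ≤ η / (2 * ‖u‖) * ‖q - ps‖ := hlo
        _ = ε * (η / 2) := by rw [hnq]; exact heq
    have hgq : |g ps| - ε * c - ε * (η / 2) ≤ |g q| := by
      have t1 : |g ps| - |g q| ≤ |g ps - g q| := abs_sub_abs_le_abs_sub _ _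
      have t2 : |g ps - g q| = |g q - g ps| := abs_sub_comm _ _
      have t3 : |g q - g ps| ≤ |g q - g ps + ε * L u| + |ε * L u| := by
        have h := abs_add_le (g q - g ps + ε * L u) (-(ε * L u))
        simpa using h
      have t4 : |ε * L u| ≤ ε * c := by
        rw [abs_mul, abs_of_pos hIoc.1]
        exact mul_le_mul_of_nonneg_left hLb hIoc.1.le
      linarith
    have hcontr := hmax' q hqS
    rw [hq2] at hcontr
    nlinarith [mul_pos hIoc.1 hη]

/-- Local stability of the semilinear hyperbolic mixed problem under
perturbation of the data: with continuous data, hyperbolicity and the Lipschitz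
hypotheses, `q₀ = n L_F (1 + n L_H)`, `q₀ t₀ < 1`, `t₀ · max_i sup |Λ_i| < l`; if `W`
is a `C¹` solution of the mixed problem and `U` a `C¹` solution of the problem
perturbed by continuous `M¹, M², M³` (in the equation, the initial condition, and the
boundary conditions respectively), then for any upper bounds `m₁, m₂, m₃` of the sup
norms of `M¹, M², M³`,
`max_i sup |U_i − W_i| ≤ (1/(1 − q₀t₀)) ((m₂ + t₀ m₁)(1 + n L_H) + m₃)`. -/
theorem statement5
    (n k : ℕ) (hn : 1 ≤ n) (hk : 1 ≤ k) (hkn : k ≤ n)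
    (l t₀ : ℝ) (hl : 0 < l) (ht₀ : 0 < t₀)
    (Λ : ℝ × ℝ → Fin n → ℝ) (F : ℝ × ℝ → (Fin n → ℝ) → Fin n → ℝ)
    (A : ℝ → Fin n → ℝ) (H : ℝ → (Fin n → ℝ) → Fin n → ℝ)
    (hΛ : ContinuousOn Λ (MixedRect l t₀))
    (hF : ContinuousOn (fun q : (ℝ × ℝ) × (Fin n → ℝ) => F q.1 q.2)
      (MixedRect l t₀ ×ˢ (Set.univ : Set (Fin n → ℝ))))
    (hH : ContinuousOn (fun q : ℝ × (Fin n → ℝ) => H q.1 q.2)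
      (Set.Icc (0 : ℝ) t₀ ×ˢ (Set.univ : Set (Fin n → ℝ))))
    (hA : ContinuousOn A (Set.Icc 0 l))
    (hhyp : HyperbolicOn n k Λ (MixedRect l t₀))
    (LF LH : ℝ) (hLF : 0 ≤ LF) (hLH : 0 ≤ LH)
    (hLipF : LipschitzFOn n F (MixedRect l t₀) LF)
    (hLipH : LipschitzHOn n H t₀ LH)
    (hq₀ : (n : ℝ) * LF * (1 + n * LH) * t₀ < 1)
    (MΛ : ℝ) (hMΛ : ∀ p ∈ MixedRect l t₀, ∀ i : Fin n, |Λ p i| ≤ MΛ)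
    (hMΛl : t₀ * MΛ < l)
    (M₁ : ℝ × ℝ → Fin n → ℝ) (M₂ : ℝ → Fin n → ℝ) (M₃ : ℝ → Fin n → ℝ)
    (hM₁ : ContinuousOn M₁ (MixedRect l t₀))
    (hM₂ : ContinuousOn M₂ (Set.Icc 0 l))
    (hM₃ : ContinuousOn M₃ (Set.Icc 0 t₀))
    (W U : ℝ × ℝ → Fin n → ℝ)
    (hW : ContDiffOn ℝ 1 W (MixedRect l t₀))
    (hWsol : IsMixedSolution n k l t₀ Λ F A H W)
    (hU : ContDiffOn ℝ 1 U (MixedRect l t₀))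
    (hUsol : IsMixedSolution n k l t₀ Λ
      (fun p y i => F p y i + M₁ p i)
      (fun x i => A x i + M₂ x i)
      (fun t z i => H t z i + M₃ t i) U) :
    ∀ m₁ m₂ m₃ : ℝ,
      (∀ p ∈ MixedRect l t₀, ∀ i : Fin n, |M₁ p i| ≤ m₁) →
      (∀ x ∈ Set.Icc (0 : ℝ) l, ∀ i : Fin n, |M₂ x i| ≤ m₂) →
      (∀ t ∈ Set.Icc (0 : ℝ) t₀, ∀ i : Fin n, |M₃ t i| ≤ m₃) →
      ∀ p ∈ MixedRect l t₀, ∀ i : Fin n,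
        |U p i - W p i| ≤ (1 / (1 - (n : ℝ) * LF * (1 + n * LH) * t₀)) *
          ((m₂ + t₀ * m₁) * (1 + n * LH) + m₃) := by
  classical
  intro m₁ m₂ m₃ hm₁ hm₂ hm₃
  -- basic facts about the rectangle
  have hRc : IsCompact (MixedRect l t₀) := isCompact_Icc.prod isCompact_Icc
  have h00 : ((0 : ℝ), (0 : ℝ)) ∈ MixedRect l t₀ :=
    mem_mixedRect'.mpr ⟨⟨le_rfl, hl.le⟩, le_rfl, ht₀.le⟩
  -- an index with value < k and general index
  have hkpos : 0 < k := hk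
  have h0n : 0 < n := hn
  set i₁ : Fin n := ⟨0, h0n⟩ with hi₁
  have hi₁k : (i₁ : ℕ) < k := hkpos
  -- nonnegativity of the bounds
  have hm₁0 : 0 ≤ m₁ := le_trans (abs_nonneg _) (hm₁ _ h00 i₁)
  have hm₂0 : 0 ≤ m₂ := le_trans (abs_nonneg _) (hm₂ 0 ⟨le_rfl, hl.le⟩ i₁)
  have hm₃0 : 0 ≤ m₃ := le_trans (abs_nonneg _) (hm₃ 0 ⟨le_rfl, ht₀.le⟩ i₁)
  -- MΛ is positive
  have hMΛ0 : 0 < MΛ := by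
    have h1 := (hhyp _ h00 i₁).1 hi₁k
    have h2 := hMΛ _ h00 i₁
    have h3 : 0 < |Λ ((0 : ℝ), (0 : ℝ)) i₁| := abs_pos.mpr (ne_of_lt h1)
    linarith
  -- the sup `d` of |U - W|
  have hGc : ContinuousOn (fun p : ℝ × ℝ => ‖U p - W p‖) (MixedRect l t₀) :=
    (hU.continuousOn.sub hW.continuousOn).norm
  obtain ⟨p₀, hp₀, hmaxG⟩ := hRc.exists_isMaxOn ⟨_, h00⟩ hGc
  set d : ℝ := ‖U p₀ - W p₀‖ with hdd
  have hd0 : 0 ≤ d := norm_nonneg _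
  have hd : ∀ p ∈ MixedRect l t₀, ∀ i : Fin n, |U p i - W p i| ≤ d := by
    intro p hp i
    have h1 := norm_le_pi_norm (U p - W p) i
    have h2 : ‖(U p - W p) i‖ = |U p i - W p i| := by
      simp [Real.norm_eq_abs]
    calc |U p i - W p i| = ‖(U p - W p) i‖ := h2.symm
      _ ≤ ‖U p - W p‖ := h1
      _ ≤ d := hmaxG hp
  set c : ℝ := (n : ℝ) * LF * d + m₁ with hcc
  have hc0 : 0 ≤ c := by positivity
  -- differentiability of components
  have hUd : DifferentiableOn ℝ U (MixedRect l t₀) := hU.differentiableOn one_ne_zero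
  have hWd : DifferentiableOn ℝ W (MixedRect l t₀) := hW.differentiableOn one_ne_zero
  -- the crucial derivative bound
  have hderiv : ∀ p ∈ MixedRect l t₀, ∀ i : Fin n,
      ∃ L : (ℝ × ℝ) →L[ℝ] ℝ,
        HasFDerivWithinAt (fun q => U q i - W q i) L (MixedRect l t₀) p ∧
        |L (Λ p i, 1)| ≤ c := by
    intro p hp i
    have hUdi : DifferentiableWithinAt ℝ (fun q => U q i) (MixedRect l t₀) p :=
      (differentiableWithinAt_pi.mp (hUd p hp)) i
    have hWdi : DifferentiableWithinAt ℝ (fun q => W q i) (MixedRect l t₀) p :=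
      (differentiableWithinAt_pi.mp (hWd p hp)) i
    set LU := fderivWithin ℝ (fun q => U q i) (MixedRect l t₀) p with hLU'
    set LW := fderivWithin ℝ (fun q => W q i) (MixedRect l t₀) p with hLW'
    have hLU : HasFDerivWithinAt (fun q => U q i) LU (MixedRect l t₀) p :=
      hUdi.hasFDerivWithinAt
    have hLW : HasFDerivWithinAt (fun q => W q i) LW (MixedRect l t₀) p :=
      hWdi.hasFDerivWithinAt
    refine ⟨LU - LW, hLU.sub hLW, ?_⟩
    have hsplit : ∀ L : (ℝ × ℝ) →L[ℝ] ℝ, L (Λ p i, 1) = L (0, 1) + Λ p i * L (1, 0) := by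
      intro L
      have h : ((Λ p i, 1) : ℝ × ℝ) = ((0, 1) : ℝ × ℝ) + Λ p i • ((1, 0) : ℝ × ℝ) := by
        simp [Prod.ext_iff, smul_eq_mul]
      rw [h, map_add, map_smul, smul_eq_mul]
    have hU1 := hUsol.1 p hp i
    have hW1 := hWsol.1 p hp i
    simp only at hU1 hW1
    have hval : (LU - LW) (Λ p i, 1) = (F p (U p) i - F p (W p) i) + M₁ p i := by
      rw [ContinuousLinearMap.sub_apply, hsplit LU, hsplit LW]
      linarith
    rw [hval]
    have hsum : ∑ j, |U p j - W p j| ≤ (n : ℝ) * d := by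
      calc ∑ j, |U p j - W p j| ≤ ∑ _j : Fin n, d :=
            Finset.sum_le_sum fun j _ => hd p hp j
        _ = (n : ℝ) * d := by
            simp [Finset.sum_const, Finset.card_univ, nsmul_eq_mul]
    calc |(F p (U p) i - F p (W p) i) + M₁ p i|
        ≤ |F p (U p) i - F p (W p) i| + |M₁ p i| := abs_add_le _ _
      _ ≤ LF * ∑ j, |U p j - W p j| + m₁ :=
          add_le_add (hLipF p hp i (U p) (W p)) (hm₁ p hp i)
      _ ≤ LF * ((n : ℝ) * d) + m₁ := by
          have := mul_le_mul_of_nonneg_left hsum hLF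
          linarith
      _ = c := by rw [hcc]; ring
  -- continuity of components
  have hgc : ∀ i : Fin n, ContinuousOn (fun q => U q i - W q i) (MixedRect l t₀) :=
    fun i => ((continuous_apply i).comp_continuousOn hU.continuousOn).sub
      ((continuous_apply i).comp_continuousOn hW.continuousOn)
  -- initial data bound
  have hinit : ∀ x ∈ Set.Icc (0 : ℝ) l, ∀ j : Fin n, |U (x, 0) j - W (x, 0) j| ≤ m₂ := by
    intro x hx j
    have h1 := hUsol.2.1 x hx j
    have h2 := hWsol.2.1 x hx j
    simp only at h1
    rw [h1, h2]
    simpa using hm₂ x hx j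
  -- the trace bound along the outflow boundary
  have htrace : ∀ τ ∈ Set.Icc (0 : ℝ) t₀, ∀ j : Fin n,
      ((j : ℕ) < k → |U (0, τ) j - W (0, τ) j| ≤ m₂ + c * t₀) ∧
      (k ≤ (j : ℕ) → |U (l, τ) j - W (l, τ) j| ≤ m₂ + c * t₀) := by
    intro τ hτ j
    obtain ⟨hτ0, hτt⟩ := hτ
    constructor
    · intro hjk
      apply le_of_forall_pos_le_add
      intro ε hε
      set η : ℝ := ε / t₀ with hηη
      have hη : 0 < η := div_pos hε ht₀
      set S : Set (ℝ × ℝ) := MixedRect l t₀ ∩ {p : ℝ × ℝ | p.1 ≤ MΛ * (τ - p.2)} with hSS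
      have hScl : IsClosed {p : ℝ × ℝ | p.1 ≤ MΛ * (τ - p.2)} :=
        isClosed_le continuous_fst (continuous_const.mul (continuous_const.sub continuous_snd))
      have hmem0τ : ((0 : ℝ), τ) ∈ S := by
        refine ⟨mem_mixedRect'.mpr ⟨⟨le_rfl, hl.le⟩, hτ0, hτt⟩, ?_⟩
        show (0 : ℝ) ≤ MΛ * (τ - τ)
        simp
      have happ := key_max l t₀ S (hRc.inter_right hScl) ⟨_, hmem0τ⟩
        Set.inter_subset_left (fun q => U q j - W q j) (fun q => Λ q j) (fun _ => False)
        ((hgc j).mono Set.inter_subset_left) c m₂ η hc0 hη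
        (fun p hp _ _ => hderiv p hp.1 j)
        (by
          rintro p ⟨hpR, hpC⟩ hp2 _
          obtain ⟨⟨hx0, hxl⟩, ht0, htt⟩ := mem_mixedRect'.mp hpR
          have hΛneg : Λ p j < 0 := (hhyp p hpR j).1 hjk
          have habs := abs_le.mp (hMΛ p hpR j)
          refine ⟨p.2, hp2, ?_⟩
          intro ε' hε'0 hε'le
          rw [pair_sub_smul]
          simp only [mul_one]
          have hmul : ε' * (-Λ p j) ≤ ε' * MΛ :=
            mul_le_mul_of_nonneg_left (by linarith [habs.1]) hε'0.le
          have hcone : p.1 ≤ MΛ * (τ - p.2) := hpC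
          have hτle : MΛ * (τ - (p.2 - ε')) ≤ MΛ * t₀ := by
            apply mul_le_mul_of_nonneg_left _ hMΛ0.le
            linarith
          refine ⟨mixedRect_mk_mem ?_ ?_ ?_ ?_, ?_⟩
          · nlinarith
          · have : p.1 - ε' * Λ p j ≤ MΛ * (τ - (p.2 - ε')) := by nlinarith
            linarith
          · linarith
          · linarith
          · show p.1 - ε' * Λ p j ≤ MΛ * (τ - (p.2 - ε'))
            nlinarith)
        (by
          rintro ⟨x, t⟩ ⟨hpR, _⟩ hcase
          rcases hcase with h0 | hF'
          · have h0' : t = 0 := h0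
            subst h0'
            exact hinit x ⟨(mem_mixedRect'.mp hpR).1.1, (mem_mixedRect'.mp hpR).1.2⟩ j
          · exact absurd hF' (by simp))
      have hres := happ ((0 : ℝ), τ) hmem0τ
      simp only at hres
      have e1 : c * τ ≤ c * t₀ := mul_le_mul_of_nonneg_left hτt hc0
      have e2 : η * τ ≤ η * t₀ := mul_le_mul_of_nonneg_left hτt hη.le
      have e3 : η * t₀ = ε := by
        rw [hηη]; field_simp
      nlinarith
    · intro hjk
      apply le_of_forall_pos_le_add
      intro ε hε
      set η : ℝ := ε / t₀ with hηη
      have hη : 0 < η := div_pos hε ht₀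
      set S : Set (ℝ × ℝ) := MixedRect l t₀ ∩ {p : ℝ × ℝ | l - MΛ * (τ - p.2) ≤ p.1} with hSS
      have hScl : IsClosed {p : ℝ × ℝ | l - MΛ * (τ - p.2) ≤ p.1} :=
        isClosed_le (continuous_const.sub
          (continuous_const.mul (continuous_const.sub continuous_snd))) continuous_fst
      have hmemlτ : ((l : ℝ), τ) ∈ S := by
        refine ⟨mem_mixedRect'.mpr ⟨⟨hl.le, le_rfl⟩, hτ0, hτt⟩, ?_⟩
        show l - MΛ * (τ - τ) ≤ l
        simp
      have happ := key_max l t₀ S (hRc.inter_right hScl) ⟨_, hmemlτ⟩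
        Set.inter_subset_left (fun q => U q j - W q j) (fun q => Λ q j) (fun _ => False)
        ((hgc j).mono Set.inter_subset_left) c m₂ η hc0 hη
        (fun p hp _ _ => hderiv p hp.1 j)
        (by
          rintro p ⟨hpR, hpC⟩ hp2 _
          obtain ⟨⟨hx0, hxl⟩, ht0, htt⟩ := mem_mixedRect'.mp hpR
          have hΛpos : 0 < Λ p j := (hhyp p hpR j).2 hjk
          have habs := abs_le.mp (hMΛ p hpR j)
          refine ⟨p.2, hp2, ?_⟩
          intro ε' hε'0 hε'le
          rw [pair_sub_smul]
          simp only [mul_one]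
          have hmul : ε' * Λ p j ≤ ε' * MΛ :=
            mul_le_mul_of_nonneg_left habs.2 hε'0.le
          have hcone : l - MΛ * (τ - p.2) ≤ p.1 := hpC
          have hτle : MΛ * (τ - (p.2 - ε')) ≤ MΛ * t₀ := by
            apply mul_le_mul_of_nonneg_left _ hMΛ0.le
            linarith
          refine ⟨mixedRect_mk_mem ?_ ?_ ?_ ?_, ?_⟩
          · nlinarith
          · nlinarith
          · linarith
          · linarith
          · show l - MΛ * (τ - (p.2 - ε')) ≤ p.1 - ε' * Λ p j
            nlinarith
        )
        (by
          rintro ⟨x, t⟩ ⟨hpR, _⟩ hcase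
          rcases hcase with h0 | hF'
          · have h0' : t = 0 := h0
            subst h0'
            exact hinit x ⟨(mem_mixedRect'.mp hpR).1.1, (mem_mixedRect'.mp hpR).1.2⟩ j
          · exact absurd hF' (by simp))
      have hres := happ ((l : ℝ), τ) hmemlτ
      simp only at hres
      have e1 : c * τ ≤ c * t₀ := mul_le_mul_of_nonneg_left hτt hc0
      have e2 : η * τ ≤ η * t₀ := mul_le_mul_of_nonneg_left hτt hη.le
      have e3 : η * t₀ = ε := by
        rw [hηη]; field_simp
      nlinarith
  -- the inflow boundary bound
  set w : ℝ := m₂ + c * t₀ with hww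
  have hw0 : 0 ≤ w := by positivity
  have hbdry : ∀ τ ∈ Set.Icc (0 : ℝ) t₀, ∀ i : Fin n,
      (k ≤ (i : ℕ) → |U (0, τ) i - W (0, τ) i| ≤ (n : ℝ) * LH * w + m₃) ∧
      ((i : ℕ) < k → |U (l, τ) i - W (l, τ) i| ≤ (n : ℝ) * LH * w + m₃) := by
    intro τ hτ i
    have hsum : ∑ j, |bTrace n k l U τ j - bTrace n k l W τ j| ≤ (n : ℝ) * w := by
      calc ∑ j, |bTrace n k l U τ j - bTrace n k l W τ j| ≤ ∑ _j : Fin n, w := by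
            apply Finset.sum_le_sum
            intro j _
            by_cases hj : (j : ℕ) < k
            · simpa [bTrace, hj] using (htrace τ hτ j).1 hj
            · simpa [bTrace, hj] using (htrace τ hτ j).2 (not_lt.mp hj)
        _ = (n : ℝ) * w := by
            simp [Finset.sum_const, Finset.card_univ, nsmul_eq_mul]
    have hHest : |H τ (bTrace n k l U τ) i - H τ (bTrace n k l W τ) i|
        ≤ (n : ℝ) * LH * w := by
      calc |H τ (bTrace n k l U τ) i - H τ (bTrace n k l W τ) i|
          ≤ LH * ∑ j, |bTrace n k l U τ j - bTrace n k l W τ j| :=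
            hLipH τ hτ i _ _
        _ ≤ LH * ((n : ℝ) * w) := mul_le_mul_of_nonneg_left hsum hLH
        _ = (n : ℝ) * LH * w := by ring
    constructor
    · intro hki
      have h1 := (hUsol.2.2 τ hτ i).1 hki
      have h2 := (hWsol.2.2 τ hτ i).1 hki
      simp only at h1
      rw [h1, h2]
      have heq : H τ (bTrace n k l U τ) i + M₃ τ i - H τ (bTrace n k l W τ) i
          = (H τ (bTrace n k l U τ) i - H τ (bTrace n k l W τ) i) + M₃ τ i := by ring
      rw [heq]
      calc |(H τ (bTrace n k l U τ) i - H τ (bTrace n k l W τ) i) + M₃ τ i|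
          ≤ |H τ (bTrace n k l U τ) i - H τ (bTrace n k l W τ) i| + |M₃ τ i| := abs_add_le _ _
        _ ≤ (n : ℝ) * LH * w + m₃ := add_le_add hHest (hm₃ τ hτ i)
    · intro hik
      have h1 := (hUsol.2.2 τ hτ i).2 hik
      have h2 := (hWsol.2.2 τ hτ i).2 hik
      simp only at h1
      rw [h1, h2]
      have heq : H τ (bTrace n k l U τ) i + M₃ τ i - H τ (bTrace n k l W τ) i
          = (H τ (bTrace n k l U τ) i - H τ (bTrace n k l W τ) i) + M₃ τ i := by ring
      rw [heq]
      calc |(H τ (bTrace n k l U τ) i - H τ (bTrace n k l W τ) i) + M₃ τ i|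
          ≤ |H τ (bTrace n k l U τ) i - H τ (bTrace n k l W τ) i| + |M₃ τ i| := abs_add_le _ _
        _ ≤ (n : ℝ) * LH * w + m₃ := add_le_add hHest (hm₃ τ hτ i)
  -- the main estimate
  set b : ℝ := max m₂ ((n : ℝ) * LH * w + m₃) with hbb
  have hb0 : 0 ≤ b := le_trans hm₂0 (le_max_left _ _)
  have hmain : ∀ p ∈ MixedRect l t₀, ∀ i : Fin n, |U p i - W p i| ≤ b + c * t₀ := by
    intro p hp i
    apply le_of_forall_pos_le_add
    intro ε hε
    set η : ℝ := ε / t₀ with hηη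
    have hη : 0 < η := div_pos hε ht₀
    have happ := key_max l t₀ (MixedRect l t₀) hRc ⟨_, h00⟩ (le_refl _)
      (fun q => U q i - W q i) (fun q => Λ q i)
      (fun q => q.1 = if (i : ℕ) < k then l else 0)
      (hgc i) c b η hc0 hη
      (fun p' hp' _ _ => hderiv p' hp' i)
      (by
        intro p' hp' hp'2 hp'E
        obtain ⟨⟨hx0, hxl⟩, ht0, htt⟩ := mem_mixedRect'.mp hp'
        have habs := abs_le.mp (hMΛ p' hp' i)
        by_cases hik : (i : ℕ) < k
        · rw [if_pos hik] at hp'E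
          have hxl' : p'.1 < l := lt_of_le_of_ne hxl hp'E
          have hΛneg : Λ p' i < 0 := (hhyp p' hp' i).1 hik
          refine ⟨min p'.2 ((l - p'.1) / MΛ), lt_min hp'2 (div_pos (by linarith) hMΛ0), ?_⟩
          intro ε' hε'0 hε'le
          have hε'2 : ε' ≤ p'.2 := le_trans hε'le (min_le_left _ _)
          have hε'x : ε' * MΛ ≤ l - p'.1 := by
            have := le_trans hε'le (min_le_right _ _)
            calc ε' * MΛ ≤ ((l - p'.1) / MΛ) * MΛ :=
                  mul_le_mul_of_nonneg_right this hMΛ0.le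
              _ = l - p'.1 := by field_simp
          rw [pair_sub_smul]
          simp only [mul_one]
          have hmul : ε' * (-Λ p' i) ≤ ε' * MΛ :=
            mul_le_mul_of_nonneg_left (by linarith [habs.1]) hε'0.le
          refine mixedRect_mk_mem ?_ ?_ ?_ ?_
          · nlinarith
          · nlinarith
          · linarith
          · linarith
        · rw [if_neg hik] at hp'E
          have hx0' : 0 < p'.1 := lt_of_le_of_ne hx0 (Ne.symm hp'E)
          have hΛpos : 0 < Λ p' i := (hhyp p' hp' i).2 (not_lt.mp hik)
          refine ⟨min p'.2 (p'.1 / MΛ), lt_min hp'2 (div_pos hx0' hMΛ0), ?_⟩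
          intro ε' hε'0 hε'le
          have hε'2 : ε' ≤ p'.2 := le_trans hε'le (min_le_left _ _)
          have hε'x : ε' * MΛ ≤ p'.1 := by
            have := le_trans hε'le (min_le_right _ _)
            calc ε' * MΛ ≤ (p'.1 / MΛ) * MΛ :=
                  mul_le_mul_of_nonneg_right this hMΛ0.le
              _ = p'.1 := by field_simp
          rw [pair_sub_smul]
          simp only [mul_one]
          have hmul : ε' * Λ p' i ≤ ε' * MΛ :=
            mul_le_mul_of_nonneg_left habs.2 hε'0.le
          refine mixedRect_mk_mem ?_ ?_ ?_ ?_
          · nlinarith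
          · nlinarith
          · linarith
          · linarith)
      (by
        rintro ⟨x, t⟩ hpR hcase
        obtain ⟨⟨hx0, hxl⟩, ht0, htt⟩ := mem_mixedRect'.mp hpR
        rcases hcase with h0 | hE
        · have h0' : t = 0 := h0
          subst h0'
          exact le_trans (hinit x ⟨hx0, hxl⟩ i) (le_max_left _ _)
        · have hE' : x = if (i : ℕ) < k then l else 0 := hE
          by_cases hik : (i : ℕ) < k
          · rw [if_pos hik] at hE'
            subst hE'
            exact le_trans ((hbdry t ⟨ht0, htt⟩ i).2 hik) (le_max_right _ _)
          · rw [if_neg hik] at hE'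
            subst hE'
            exact le_trans ((hbdry t ⟨ht0, htt⟩ i).1 (not_lt.mp hik)) (le_max_right _ _))
    have hres := happ p hp
    have hp2 := (mem_mixedRect'.mp hp).2
    have e1 : c * p.2 ≤ c * t₀ := mul_le_mul_of_nonneg_left hp2.2 hc0
    have e2 : η * p.2 ≤ η * t₀ := mul_le_mul_of_nonneg_left hp2.2 hη.le
    have e3 : η * t₀ = ε := by
      rw [hηη]; field_simp
    nlinarith
  -- conclude
  intro p hp i
  have hq1 : 0 < 1 - (n : ℝ) * LF * (1 + n * LH) * t₀ := by linarith
  have hdb : d ≤ b + c * t₀ := by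
    have hpi : ∀ i : Fin n, ‖(U p₀ - W p₀) i‖ ≤ b + c * t₀ := by
      intro i
      have := hmain p₀ hp₀ i
      simpa [Real.norm_eq_abs] using this
    have hnn : 0 ≤ b + c * t₀ := by positivity
    exact (pi_norm_le_iff_of_nonneg hnn).mpr hpi
  have hbsum : b ≤ m₂ + ((n : ℝ) * LH * w + m₃) := by
    have h1 : 0 ≤ (n : ℝ) * LH * w + m₃ := by positivity
    exact max_le (le_add_of_nonneg_right h1) (le_add_of_nonneg_left hm₂0)
  have hfixed : d ≤ ((m₂ + t₀ * m₁) * (1 + (n : ℝ) * LH) + m₃)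
      + ((n : ℝ) * LF * (1 + n * LH) * t₀) * d := by
    have e : m₂ + ((n : ℝ) * LH * w + m₃) + c * t₀
        = ((m₂ + t₀ * m₁) * (1 + (n : ℝ) * LH) + m₃)
          + ((n : ℝ) * LF * (1 + n * LH) * t₀) * d := by
      rw [hww, hcc]; ring
    linarith
  have hdfin : d ≤ (1 / (1 - (n : ℝ) * LF * (1 + n * LH) * t₀)) *
      ((m₂ + t₀ * m₁) * (1 + n * LH) + m₃) := by
    rw [one_div_mul_eq_div, le_div_iff₀ hq1]
    nlinarith
  exact le_trans (hd p hp i) hdfin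
end
end

section
/- Existence, uniqueness, and boundary exit of backward characteristics: Let l > 0, T > 0, and let λ : ℝ² → ℝ be continuously differentiable with λ(x,t) > 0 for all (x,t) ∈ [0,l]×[0,T]. Then for every (x,t) ∈ [0,l]×[0,T] there exist a unique t* ∈ [0,t] and a unique continuously differentiable function ω : [t*, t] → [0,l] such that ω(t) = x, ω′(τ) = λ(ω(τ), τ) for all τ ∈ [t*, t], ω(τ) ∈ [0,l] for all τ ∈ [t*, t], and either t* = 0 or ω(t*) = 0. Moreover, ω(τ) < x for all τ ∈ [t*, t) (in particular the characteristic can only leave [0,l]×[0,T] backward in time through the initial line t = 0 or the lateral boundary x = 0), and if t* > 0 then ω(t*) = 0. -/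
open Set NNReal

noncomputable section

/-- Projection of the plane onto the rectangle `[0,l] × [0,T]`. -/
def rectProj (l T : ℝ) (p : ℝ × ℝ) : ℝ × ℝ :=
  (max (min p.1 l) 0, max (min p.2 T) 0)

lemma rectProj_mem (l T : ℝ) (hl : 0 ≤ l) (hT : 0 ≤ T) (p : ℝ × ℝ) :
    rectProj l T p ∈ MixedRect l T :=
  ⟨⟨le_max_right _ _, max_le (min_le_right _ _) hl⟩,
   ⟨le_max_right _ _, max_le (min_le_right _ _) hT⟩⟩

lemma rectProj_of_mem {l T : ℝ} {p : ℝ × ℝ} (hp : p ∈ MixedRect l T) :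
    rectProj l T p = p := by
  obtain ⟨⟨h1, h2⟩, h3, h4⟩ := hp
  simp only [rectProj]
  rw [min_eq_left h2, max_eq_left h1, min_eq_left h4, max_eq_left h3]

lemma rectProj_lipschitz (l T : ℝ) : LipschitzWith 1 (rectProj l T) := by
  have h1 : LipschitzWith 1 fun p : ℝ × ℝ => max (min p.1 l) 0 :=
    (LipschitzWith.prod_fst.min_const l).max_const 0
  have h2 : LipschitzWith 1 fun p : ℝ × ℝ => max (min p.2 T) 0 :=
    (LipschitzWith.prod_snd.min_const T).max_const 0
  have h3 := h1.prodMk h2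
  rw [max_self] at h3
  exact h3

/-- Existence, uniqueness, and boundary exit of backward characteristics:
if `λ` is `C¹` on `ℝ²` and positive on `[0,l] × [0,T]`, then through each point
`(x,t)` of the rectangle there is a unique exit time `t* ∈ [0,t]` and a unique
characteristic `ω : [t*,t] → [0,l]` with `ω(t) = x`, `ω′(τ) = λ(ω(τ),τ)` on `[t*,t]`
(one-sided at the endpoints), and either `t* = 0` or `ω(t*) = 0`; moreover `ω(τ) < x`
for `τ ∈ [t*,t)`, and `t* > 0` implies `ω(t*) = 0`. -/
theorem statement6 (l T : ℝ) (hl : 0 < l) (hT : 0 < T)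
    (lam : ℝ × ℝ → ℝ) (hlam : ContDiff ℝ 1 lam)
    (hpos : ∀ p ∈ MixedRect l T, 0 < lam p) :
    ∀ x ∈ Set.Icc (0 : ℝ) l, ∀ t ∈ Set.Icc (0 : ℝ) T,
      ∃ ts ∈ Set.Icc (0 : ℝ) t, ∃ ω : ℝ → ℝ,
        (ω t = x ∧
          (∀ τ ∈ Set.Icc ts t, HasDerivWithinAt ω (lam (ω τ, τ)) (Set.Icc ts t) τ) ∧
          (∀ τ ∈ Set.Icc ts t, ω τ ∈ Set.Icc 0 l) ∧
          (ts = 0 ∨ ω ts = 0)) ∧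
        (∀ τ ∈ Set.Ico ts t, ω τ < x) ∧
        (0 < ts → ω ts = 0) ∧
        (∀ ts' ∈ Set.Icc (0 : ℝ) t, ∀ ω' : ℝ → ℝ,
          (ω' t = x ∧
            (∀ τ ∈ Set.Icc ts' t, HasDerivWithinAt ω' (lam (ω' τ, τ)) (Set.Icc ts' t) τ) ∧
            (∀ τ ∈ Set.Icc ts' t, ω' τ ∈ Set.Icc 0 l) ∧
            (ts' = 0 ∨ ω' ts' = 0)) →
          ts' = ts ∧ Set.EqOn ω' ω (Set.Icc ts t)) := by
  intro x hx t ht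
  obtain ⟨hx0, hxl⟩ := hx
  obtain ⟨ht0, htT⟩ := ht
  have hPmem := rectProj_mem l T hl.le hT.le
  have hPlip := rectProj_lipschitz l T
  -- the modified coefficient, positive and Lipschitz on the whole plane
  have hlamt_pos : ∀ p : ℝ × ℝ, 0 < lam (rectProj l T p) := fun p => hpos _ (hPmem p)
  have hlamt_cont : Continuous fun p : ℝ × ℝ => lam (rectProj l T p) :=
    hlam.continuous.comp hPlip.continuous
  -- compactness and bounds
  have hcpt : IsCompact (MixedRect l T) := isCompact_Icc.prod isCompact_Icc
  have hconv : Convex ℝ (MixedRect l T) := (convex_Icc _ _).prod (convex_Icc _ _)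
  obtain ⟨M, hM⟩ := hcpt.exists_bound_of_continuousOn
    ((hlam.continuous_fderiv one_ne_zero).continuousOn)
  set K : ℝ≥0 := ⟨max M 0, le_max_right _ _⟩ with hKdef
  have hlamlip : LipschitzOnWith K lam (MixedRect l T) := by
    refine hconv.lipschitzOnWith_of_nnnorm_fderiv_le
      (fun p _ => hlam.differentiable one_ne_zero p) (fun p hp => ?_)
    rw [← NNReal.coe_le_coe, coe_nnnorm]
    exact (hM p hp).trans (le_max_left _ _)
  have hvlip : ∀ τ : ℝ, LipschitzWith K fun z : ℝ => lam (rectProj l T (z, τ)) := by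
    intro τ
    refine LipschitzWith.of_dist_le_mul fun a b => ?_
    have h1 : dist (rectProj l T (a, τ)) (rectProj l T (b, τ)) ≤ dist (a, τ) ((b, τ) : ℝ × ℝ) := by
      simpa using hPlip.dist_le_mul (a, τ) (b, τ)
    have h2 : dist ((a, τ) : ℝ × ℝ) (b, τ) = dist a b := by
      simp only [Prod.dist_eq, dist_self]
      exact max_eq_left dist_nonneg
    calc dist (lam (rectProj l T (a, τ))) (lam (rectProj l T (b, τ)))
        ≤ K * dist (rectProj l T (a, τ)) (rectProj l T (b, τ)) :=
          hlamlip.dist_le_mul _ (hPmem _) _ (hPmem _)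
      _ ≤ K * dist a b := by
          refine mul_le_mul_of_nonneg_left ?_ K.coe_nonneg
          rw [← h2]; exact h1
  obtain ⟨C, hC⟩ := hcpt.exists_bound_of_continuousOn hlam.continuous.continuousOn
  have hC0 : 0 ≤ C := (norm_nonneg _).trans (hC (0, 0) ⟨⟨le_rfl, hl.le⟩, le_rfl, hT.le⟩)
  have hbdd : ∀ p : ℝ × ℝ, ‖lam (rectProj l T p)‖ ≤ C := fun p => hC _ (hPmem p)
  -- Picard–Lindelöf on `[0, t]`
  have hPL : IsPicardLindelof (fun τ z => lam (rectProj l T (z, τ))) (tmin := 0) (tmax := t)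
      ⟨t, ⟨ht0, le_rfl⟩⟩ x ⟨C * t, by positivity⟩ 0 ⟨C, hC0⟩ K :=
    { lipschitzOnWith := fun τ _ => (hvlip τ).lipschitzOnWith
      continuousOn := fun z _ =>
        (hlamt_cont.comp (continuous_const.prodMk continuous_id)).continuousOn
      norm_le := fun τ _ z _ => hbdd _
      mul_max_le := by
        show (C:ℝ) * max (t - t) (t - 0) ≤ C * t - 0
        rw [sub_self, sub_zero, sub_zero, max_eq_right ht0] }
  obtain ⟨y, hyt, hy⟩ : ∃ y : ℝ → ℝ, y t = x ∧
      ∀ τ ∈ Icc 0 t, HasDerivWithinAt y (lam (rectProj l T (y τ, τ))) (Icc 0 t) τ :=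
    hPL.exists_eq_forall_mem_Icc_hasDerivWithinAt₀
  have hycont : ContinuousOn y (Icc 0 t) := fun τ hτ => (hy τ hτ).continuousWithinAt
  have hmono : StrictMonoOn y (Icc 0 t) := by
    refine strictMonoOn_of_deriv_pos (convex_Icc _ _) hycont fun τ hτ => ?_
    rw [interior_Icc] at hτ
    have hda : HasDerivAt y (lam (rectProj l T (y τ, τ))) τ :=
      (hy τ (Ioo_subset_Icc_self hτ)).hasDerivAt (Icc_mem_nhds hτ.1 hτ.2)
    rw [hda.deriv]
    exact hlamt_pos _
  -- the exit time
  obtain ⟨ts, hts_mem, hyts0, halt⟩ :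
      ∃ ts ∈ Icc (0:ℝ) t, 0 ≤ y ts ∧ (ts = 0 ∨ y ts = 0) := by
    by_cases h0 : 0 ≤ y 0
    · exact ⟨0, ⟨le_rfl, ht0⟩, h0, Or.inl rfl⟩
    · have hmem : (0:ℝ) ∈ Icc (y 0) (y t) := ⟨le_of_not_ge h0, by rw [hyt]; exact hx0⟩
      obtain ⟨ts, hts, hys⟩ := intermediate_value_Icc ht0 hycont hmem
      exact ⟨ts, hts, hys.ge, Or.inr hys⟩
  have hsub : Icc ts t ⊆ Icc 0 t := Icc_subset_Icc_left hts_mem.1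
  have hymem : ∀ τ ∈ Icc ts t, y τ ∈ Icc 0 l := by
    intro τ hτ
    have h1 : y ts ≤ y τ :=
      hmono.monotoneOn (hsub ⟨le_rfl, hts_mem.2⟩) (hsub hτ) hτ.1
    have h2 : y τ ≤ y t := hmono.monotoneOn (hsub hτ) ⟨ht0, le_rfl⟩ hτ.2
    exact ⟨hyts0.trans h1, h2.trans (hyt ▸ hxl)⟩
  have hrectmem : ∀ τ ∈ Icc ts t, (y τ, τ) ∈ MixedRect l T := fun τ hτ =>
    ⟨hymem τ hτ, (hsub hτ).1, (hsub hτ).2.trans htT⟩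
  refine ⟨ts, hts_mem, y, ⟨hyt, ?_, hymem, halt⟩, ?_, ?_, ?_⟩
  · -- the ODE with the original coefficient
    intro τ hτ
    have h1 := (hy τ (hsub hτ)).mono hsub
    rwa [rectProj_of_mem (hrectmem τ hτ)] at h1
  · -- strictly below x before time t
    intro τ hτ
    rw [← hyt]
    exact hmono (hsub ⟨hτ.1, hτ.2.le⟩) ⟨ht0, le_rfl⟩ hτ.2
  · -- positive exit time means lateral exit
    intro hts_pos
    exact halt.resolve_left hts_pos.ne'
  · -- uniqueness
    rintro ts' hts' ω' ⟨hω't, hω'd, hω'mem, hω'alt⟩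
    have hω'cont : ContinuousOn ω' (Icc ts' t) := fun τ hτ => (hω'd τ hτ).continuousWithinAt
    have hω'rect : ∀ τ ∈ Icc ts' t, (ω' τ, τ) ∈ MixedRect l T := fun τ hτ =>
      ⟨hω'mem τ hτ, hts'.1.trans hτ.1, hτ.2.trans htT⟩
    set a := max ts ts' with hadef
    have hat : a ≤ t := max_le hts_mem.2 hts'.2
    have ha0 : 0 ≤ a := hts_mem.1.trans (le_max_left _ _)
    have heq : EqOn ω' y (Icc a t) := by
      refine ODE_solution_unique_of_mem_Icc_left (v := fun τ z => lam (rectProj l T (z, τ)))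
        (s := fun _ => (univ : Set ℝ)) (K := K)
        (fun τ _ => (hvlip τ).lipschitzOnWith.mono (subset_univ _))
        (hω'cont.mono (Icc_subset_Icc_left (le_max_right _ _))) ?_
        (fun _ _ => mem_univ _)
        (hycont.mono (Icc_subset_Icc_left ha0)) ?_
        (fun _ _ => mem_univ _) (hω't.trans hyt.symm)
      · intro τ hτ
        have hmem : τ ∈ Icc ts' t := ⟨(le_max_right ts ts').trans hτ.1.le, hτ.2⟩
        have h1 := hω'd τ hmem
        show HasDerivWithinAt ω' (lam (rectProj l T (ω' τ, τ))) (Iic τ) τ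
        rw [rectProj_of_mem (hω'rect τ hmem)]
        exact h1.mono_of_mem_nhdsWithin
          (Icc_mem_nhdsLE_of_mem ⟨(le_max_right ts ts').trans_lt hτ.1, hτ.2⟩)
      · intro τ hτ
        have hmem : τ ∈ Icc 0 t := ⟨ha0.trans hτ.1.le, hτ.2⟩
        exact (hy τ hmem).mono_of_mem_nhdsWithin
          (Icc_mem_nhdsLE_of_mem ⟨ha0.trans_lt hτ.1, hτ.2⟩)
    have hts'ts : ts' = ts := by
      rcases lt_trichotomy ts' ts with h | h | h
      · exfalso
        have hts_pos : 0 < ts := hts'.1.trans_lt h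
        have hyts : y ts = 0 := halt.resolve_left hts_pos.ne'
        have hω'mono : StrictMonoOn ω' (Icc ts' t) := by
          refine strictMonoOn_of_deriv_pos (convex_Icc _ _) hω'cont fun τ hτ => ?_
          rw [interior_Icc] at hτ
          have hda : HasDerivAt ω' (lam (ω' τ, τ)) τ :=
            (hω'd τ (Ioo_subset_Icc_self hτ)).hasDerivAt (Icc_mem_nhds hτ.1 hτ.2)
          rw [hda.deriv]
          exact hpos _ (hω'rect τ (Ioo_subset_Icc_self hτ))
        have h1 : ω' ts' < ω' ts := hω'mono ⟨le_rfl, hts'.2⟩ ⟨h.le, hts_mem.2⟩ h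
        have h2 : ω' ts = y ts := heq ⟨max_le le_rfl h.le, hts_mem.2⟩
        have h3 : 0 ≤ ω' ts' := (hω'mem ts' ⟨le_rfl, hts'.2⟩).1
        rw [h2, hyts] at h1
        linarith
      · exact h
      · exfalso
        have hts'_pos : 0 < ts' := hts_mem.1.trans_lt h
        have hω'ts' : ω' ts' = 0 := hω'alt.resolve_left hts'_pos.ne'
        have h2 : ω' ts' = y ts' := heq ⟨max_le h.le le_rfl, hts'.2⟩
        have h1 : y ts < y ts' :=
          hmono (hsub ⟨le_rfl, hts_mem.2⟩) ⟨hts'.1, hts'.2⟩ h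
        rw [← h2, hω'ts'] at h1
        linarith
    refine ⟨hts'ts, ?_⟩
    have : a = ts := by rw [hadef, hts'ts, max_self]
    rw [← this]
    exact heq
end
end

section
/- A non-Lipschitz nonlinearity with log-log gradient bound: Let a, b, c, d ∈ ℝ with a > 0 and c ≥ 4, and define f : ℝ → ℝ by f(u) = (a² + b²u²)^{1/2} · log(log((c² + d²u²)^{1/2})). Then (1) f is differentiable and there exists a constant C > 0 such that |f′(u)| ≤ C · log(log(c² + d²u²)) for all u ∈ ℝ; and (2) if b ≠ 0 and d ≠ 0, then f′ is unbounded on ℝ; in particular f is not globally Lipschitz. -/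
noncomputable section

lemma st12_s_ge (c d u : ℝ) (hc : 4 ≤ c) : (16:ℝ) ≤ c^2 + d^2*u^2 := by
  nlinarith [sq_nonneg (d*u), sq_nonneg d, sq_nonneg u]

lemma st12_r_ge (c d u : ℝ) (hc : 4 ≤ c) : (4:ℝ) ≤ Real.sqrt (c^2 + d^2*u^2) := by
  have h := st12_s_ge c d u hc
  nlinarith [Real.sq_sqrt (by linarith : (0:ℝ) ≤ c^2+d^2*u^2),
    Real.sqrt_nonneg (c^2+d^2*u^2)]

lemma st12_logr_gt (c d u : ℝ) (hc : 4 ≤ c) :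
    1 < Real.log (Real.sqrt (c^2 + d^2*u^2)) := by
  have h4 := st12_r_ge c d u hc
  have he := Real.exp_one_lt_d9
  exact (Real.lt_log_iff_exp_lt (by linarith)).2 (by linarith)

lemma st12_hasDerivAt (a b c d : ℝ) (ha : 0 < a) (hc : 4 ≤ c) (u : ℝ) :
    HasDerivAt (fun u : ℝ => Real.sqrt (a ^ 2 + b ^ 2 * u ^ 2) *
        Real.log (Real.log (Real.sqrt (c ^ 2 + d ^ 2 * u ^ 2))))
      (b^2*u / Real.sqrt (a^2 + b^2*u^2) *
          Real.log (Real.log (Real.sqrt (c^2 + d^2*u^2)))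
        + Real.sqrt (a^2 + b^2*u^2) *
          (d^2*u / ((c^2 + d^2*u^2) * Real.log (Real.sqrt (c^2 + d^2*u^2))))) u := by
  have hgpos : 0 < Real.sqrt (a^2 + b^2*u^2) := Real.sqrt_pos.2 (by positivity)
  have hspos : (0:ℝ) < c^2 + d^2*u^2 := lt_of_lt_of_le (by norm_num) (st12_s_ge c d u hc)
  have hrpos : 0 < Real.sqrt (c^2 + d^2*u^2) := Real.sqrt_pos.2 hspos
  have hlogrpos : 0 < Real.log (Real.sqrt (c^2 + d^2*u^2)) :=
    lt_trans one_pos (st12_logr_gt c d u hc)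
  have hq1 : HasDerivAt (fun u : ℝ => a^2 + b^2*u^2) (2*(b^2*u)) u := by
    have := ((hasDerivAt_pow 2 u).const_mul (b^2)).const_add (a^2)
    refine this.congr_deriv ?_
    norm_num; ring
  have hq2 : HasDerivAt (fun u : ℝ => c^2 + d^2*u^2) (2*(d^2*u)) u := by
    have := ((hasDerivAt_pow 2 u).const_mul (d^2)).const_add (c^2)
    refine this.congr_deriv ?_
    norm_num; ring
  have hg : HasDerivAt (fun u : ℝ => Real.sqrt (a^2 + b^2*u^2))
      (2*(b^2*u) / (2*Real.sqrt (a^2 + b^2*u^2))) u := hq1.sqrt (by positivity)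
  have hr : HasDerivAt (fun u : ℝ => Real.sqrt (c^2 + d^2*u^2))
      (2*(d^2*u) / (2*Real.sqrt (c^2 + d^2*u^2))) u := hq2.sqrt hspos.ne'
  have hl1 : HasDerivAt (fun u : ℝ => Real.log (Real.sqrt (c^2 + d^2*u^2)))
      ((2*(d^2*u) / (2*Real.sqrt (c^2 + d^2*u^2))) / Real.sqrt (c^2 + d^2*u^2)) u :=
    hr.log hrpos.ne'
  have hl2 : HasDerivAt (fun u : ℝ => Real.log (Real.log (Real.sqrt (c^2 + d^2*u^2))))
      (((2*(d^2*u) / (2*Real.sqrt (c^2 + d^2*u^2))) / Real.sqrt (c^2 + d^2*u^2)) /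
        Real.log (Real.sqrt (c^2 + d^2*u^2))) u := hl1.log hlogrpos.ne'
  have hmul := hg.mul hl2
  have hrr : Real.sqrt (c^2 + d^2*u^2) * Real.sqrt (c^2 + d^2*u^2) = c^2 + d^2*u^2 :=
    Real.mul_self_sqrt hspos.le
  refine hmul.congr_deriv ?_
  field_simp
  ring_nf
  rw [Real.sq_sqrt (by nlinarith [sq_nonneg d, sq_nonneg u, sq_nonneg (d*u)] : (0:ℝ) ≤ u^2*d^2+c^2)]
  ring

lemma st12_log16_gt : (1:ℝ) < Real.log 16 := by
  have he := Real.exp_one_lt_d9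
  exact (Real.lt_log_iff_exp_lt (by norm_num)).2 (by linarith)

set_option maxHeartbeats 2000000

/-- A non-Lipschitz nonlinearity with log-log gradient bound: for
`a > 0`, `c ≥ 4` and `f(u) = (a² + b²u²)^{1/2} log(log((c² + d²u²)^{1/2}))`:
(1) `f` is differentiable and `|f′(u)| ≤ C log(log(c² + d²u²))` for some constant
`C > 0` and all `u`; (2) if `b ≠ 0` and `d ≠ 0` then `f′` is unbounded on `ℝ`, and in
particular `f` is not globally Lipschitz. -/
theorem statement12 (a b c d : ℝ) (ha : 0 < a) (hc : 4 ≤ c)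
    (f : ℝ → ℝ)
    (hf : ∀ u : ℝ, f u = Real.sqrt (a ^ 2 + b ^ 2 * u ^ 2) *
      Real.log (Real.log (Real.sqrt (c ^ 2 + d ^ 2 * u ^ 2)))) :
    Differentiable ℝ f ∧
    (∃ C > (0 : ℝ), ∀ u : ℝ,
      |deriv f u| ≤ C * Real.log (Real.log (c ^ 2 + d ^ 2 * u ^ 2))) ∧
    (b ≠ 0 → d ≠ 0 →
      (¬ ∃ M : ℝ, ∀ u : ℝ, |deriv f u| ≤ M) ∧
      ¬ ∃ L : ℝ, 0 ≤ L ∧ ∀ u v : ℝ, |f u - f v| ≤ L * |u - v|) := by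
  have hfe : f = fun u : ℝ => Real.sqrt (a ^ 2 + b ^ 2 * u ^ 2) *
      Real.log (Real.log (Real.sqrt (c ^ 2 + d ^ 2 * u ^ 2))) := funext hf
  subst hfe
  have hdiff : Differentiable ℝ (fun u : ℝ => Real.sqrt (a ^ 2 + b ^ 2 * u ^ 2) *
      Real.log (Real.log (Real.sqrt (c ^ 2 + d ^ 2 * u ^ 2)))) :=
    fun u => (st12_hasDerivAt a b c d ha hc u).differentiableAt
  have hderiv : ∀ u : ℝ, deriv (fun u : ℝ => Real.sqrt (a ^ 2 + b ^ 2 * u ^ 2) *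
      Real.log (Real.log (Real.sqrt (c ^ 2 + d ^ 2 * u ^ 2)))) u =
      b^2*u / Real.sqrt (a^2 + b^2*u^2) *
          Real.log (Real.log (Real.sqrt (c^2 + d^2*u^2)))
        + Real.sqrt (a^2 + b^2*u^2) *
          (d^2*u / ((c^2 + d^2*u^2) * Real.log (Real.sqrt (c^2 + d^2*u^2)))) :=
    fun u => (st12_hasDerivAt a b c d ha hc u).deriv
  -- basic facts used repeatedly
  have hm : 0 < Real.log (Real.log 16) := Real.log_pos st12_log16_gt
  set m := Real.log (Real.log 16) with hm_def
  have hLLm : ∀ u : ℝ, m ≤ Real.log (Real.log (c ^ 2 + d ^ 2 * u ^ 2)) := by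
    intro u
    have hs := st12_s_ge c d u hc
    have h1 : Real.log 16 ≤ Real.log (c ^ 2 + d ^ 2 * u ^ 2) :=
      Real.log_le_log (by norm_num) hs
    exact Real.log_le_log (lt_trans one_pos st12_log16_gt) h1
  -- the pointwise bound
  have hbound : ∀ u : ℝ, |deriv (fun u : ℝ => Real.sqrt (a ^ 2 + b ^ 2 * u ^ 2) *
      Real.log (Real.log (Real.sqrt (c ^ 2 + d ^ 2 * u ^ 2)))) u| ≤
      |b| * Real.log (Real.log (c ^ 2 + d ^ 2 * u ^ 2)) + (a * |d| + |b|) := by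
    intro u
    rw [hderiv u]
    set s := c ^ 2 + d ^ 2 * u ^ 2 with hs_def
    set g := Real.sqrt (a ^ 2 + b ^ 2 * u ^ 2) with hg_def
    set r := Real.sqrt s with hr_def
    have hs16 : (16:ℝ) ≤ s := st12_s_ge c d u hc
    have hspos : (0:ℝ) < s := by linarith
    have hgpos : 0 < g := Real.sqrt_pos.2 (by positivity)
    have hr4 : (4:ℝ) ≤ r := st12_r_ge c d u hc
    have hrpos : 0 < r := by linarith
    have hlogr : 1 < Real.log r := st12_logr_gt c d u hc
    have hrr : r * r = s := Real.mul_self_sqrt hspos.le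
    have hlogs : Real.log r = Real.log s / 2 := Real.log_sqrt hspos.le
    have hL_eq : Real.log (Real.log r) = Real.log (Real.log s) - Real.log 2 := by
      rw [hlogs, Real.log_div (by linarith) (by norm_num)]
    have hLpos : 0 < Real.log (Real.log r) := Real.log_pos hlogr
    have hLle : Real.log (Real.log r) ≤ Real.log (Real.log s) := by
      have := Real.log_pos (by norm_num : (1:ℝ) < 2)
      linarith [hL_eq]
    -- term 1
    have hbug : |b ^ 2 * u| ≤ |b| * g := by
      have h1 : Real.sqrt (b^2*u^2) ≤ g := Real.sqrt_le_sqrt (by nlinarith)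
      have h2 : Real.sqrt (b^2*u^2) = |b*u| := by
        rw [show b^2*u^2 = (b*u)^2 by ring, Real.sqrt_sq_eq_abs]
      calc |b ^ 2 * u| = |b| * |b*u| := by rw [show b^2*u = b*(b*u) by ring, abs_mul]
        _ ≤ |b| * g := by rw [← h2] at *; exact mul_le_mul_of_nonneg_left h1 (abs_nonneg b)
    have hT1 : |b^2*u / g * Real.log (Real.log r)| ≤ |b| * Real.log (Real.log s) := by
      rw [abs_mul, abs_div, abs_of_pos hgpos, abs_of_pos hLpos]
      have h3 : |b ^ 2 * u| / g ≤ |b| := (div_le_iff₀ hgpos).2 hbug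
      calc |b ^ 2 * u| / g * Real.log (Real.log r)
          ≤ |b| * Real.log (Real.log r) :=
            mul_le_mul_of_nonneg_right h3 hLpos.le
        _ ≤ |b| * Real.log (Real.log s) :=
            mul_le_mul_of_nonneg_left hLle (abs_nonneg b)
    -- term 2
    have hdu : d^2 * |u| ≤ |d| * r := by
      have h1 : Real.sqrt (d^2*u^2) ≤ r := Real.sqrt_le_sqrt (by nlinarith [sq_nonneg c])
      have h2 : Real.sqrt (d^2*u^2) = |d*u| := by
        rw [show d^2*u^2 = (d*u)^2 by ring, Real.sqrt_sq_eq_abs]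
      calc d^2 * |u| = |d| * |d*u| := by
            rw [abs_mul, show d^2 = |d| * |d| by rw [abs_mul_abs_self]; ring]; ring
        _ ≤ |d| * r := by rw [← h2]; exact mul_le_mul_of_nonneg_left h1 (abs_nonneg d)
    have hga : g ≤ a + |b| * |u| := by
      have h1 : g ≤ Real.sqrt ((a + |b| * |u|)^2) := Real.sqrt_le_sqrt
        (by nlinarith [abs_nonneg b, abs_nonneg u, mul_nonneg (abs_nonneg b) (abs_nonneg u),
          sq_abs b, sq_abs u])
      rwa [Real.sqrt_sq (by positivity)] at h1
    have hrles : r ≤ s := by nlinarith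
    have hT2 : |g * (d^2*u / (s * Real.log r))| ≤ a * |d| + |b| := by
      have hden : 0 < s * Real.log r := by positivity
      rw [abs_mul, abs_div, abs_of_pos hgpos, abs_of_pos hden]
      rw [mul_div_assoc']
      rw [div_le_iff₀ hden]
      have hb1 : g * |d^2*u| ≤ (a + |b| * |u|) * (d^2 * |u|) := by
        rw [show |d^2*u| = d^2 * |u| by rw [abs_mul, abs_of_nonneg (sq_nonneg d)]]
        exact mul_le_mul_of_nonneg_right hga (by positivity)
      have hb2 : (a + |b| * |u|) * (d^2 * |u|) = a*(d^2 * |u|) + |b| * (d^2*(|u| * |u|)) := by ring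
      have hb3 : |u| * |u| = u^2 := by rw [abs_mul_abs_self]; ring
      have hb4 : a*(d^2 * |u|) ≤ a*(|d| * s) := by
        have : d^2 * |u| ≤ |d| * s := le_trans hdu
          (mul_le_mul_of_nonneg_left hrles (abs_nonneg d))
        exact mul_le_mul_of_nonneg_left this ha.le
      have hb5 : |b| * (d^2*u^2) ≤ |b| * s := by
        have : d^2*u^2 ≤ s := by nlinarith [sq_nonneg c]
        exact mul_le_mul_of_nonneg_left this (abs_nonneg b)
      have hb6 : (a * |d| + |b|) * s ≤ (a * |d| + |b|) * (s * Real.log r) := by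
        have h7 : (0:ℝ) ≤ a * |d| + |b| := by positivity
        nlinarith [mul_nonneg (mul_nonneg h7 hspos.le) (by linarith : (0:ℝ) ≤ Real.log r - 1)]
      calc g * |d^2*u| ≤ a*(d^2 * |u|) + |b| * (d^2*u^2) := by
            rw [← hb3]; linarith [hb1, hb2.le]
        _ ≤ a*(|d| * s) + |b| * s := by linarith
        _ = (a * |d| + |b|) * s := by ring
        _ ≤ (a * |d| + |b|) * (s * Real.log r) := hb6
    calc |b^2*u / g * Real.log (Real.log r) + g * (d^2*u / (s * Real.log r))|
        ≤ |b^2*u / g * Real.log (Real.log r)| + |g * (d^2*u / (s * Real.log r))| :=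
          abs_add_le _ _
      _ ≤ |b| * Real.log (Real.log s) + (a * |d| + |b|) := add_le_add hT1 hT2
  refine ⟨hdiff, ?_, ?_⟩
  · -- existence of C
    refine ⟨|b| + (a * |d| + |b| + 1) / m, by positivity, fun u => ?_⟩
    have h1 := hbound u
    have h2 := hLLm u
    have h3 : (a * |d| + |b| + 1) / m * m = a * |d| + |b| + 1 :=
      div_mul_cancel₀ _ hm.ne'
    have h4 : (0:ℝ) ≤ (a * |d| + |b| + 1) / m := by positivity
    nlinarith [mul_le_mul_of_nonneg_left h2 h4]
  · intro hb hd
    have hbpos : 0 < |b| := abs_pos.2 hb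
    have hdpos : 0 < |d| := abs_pos.2 hd
    have hunb : ¬ ∃ M : ℝ, ∀ u : ℝ, |deriv (fun u : ℝ =>
        Real.sqrt (a ^ 2 + b ^ 2 * u ^ 2) *
        Real.log (Real.log (Real.sqrt (c ^ 2 + d ^ 2 * u ^ 2)))) u| ≤ M := by
      rintro ⟨M, hM⟩
      set T := 2*(|M|+1)/|b| with hT_def
      have hTpos : 0 < T := by positivity
      set u := max (a/|b|) (Real.exp (Real.exp T)/|d|) with hu_def
      have hu1 : a/|b| ≤ u := le_max_left _ _
      have hu2 : Real.exp (Real.exp T)/|d| ≤ u := le_max_right _ _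
      have hupos : 0 < u := lt_of_lt_of_le (by positivity) hu1
      set s := c ^ 2 + d ^ 2 * u ^ 2 with hs_def
      set g := Real.sqrt (a ^ 2 + b ^ 2 * u ^ 2) with hg_def
      set r := Real.sqrt s with hr_def
      have hs16 : (16:ℝ) ≤ s := st12_s_ge c d u hc
      have hspos : (0:ℝ) < s := by linarith
      have hgpos : 0 < g := Real.sqrt_pos.2 (by positivity)
      have hrpos : 0 < r := Real.sqrt_pos.2 hspos
      have hlogr : 1 < Real.log r := st12_logr_gt c d u hc
      -- |d| * u ≥ exp (exp T)
      have hdu : Real.exp (Real.exp T) ≤ |d| * u := by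
        rw [div_le_iff₀ hdpos] at hu2; linarith [hu2]
      have hrge : Real.exp (Real.exp T) ≤ r := by
        have h1 : Real.sqrt (d^2*u^2) ≤ r := Real.sqrt_le_sqrt (by nlinarith [sq_nonneg c])
        have h2 : Real.sqrt (d^2*u^2) = |d| * u := by
          rw [show d^2*u^2 = (|d| * u)^2 by rw [mul_pow, sq_abs], Real.sqrt_sq (by positivity)]
        linarith [h2 ▸ h1]
      have hlogrT : Real.exp T ≤ Real.log r :=
        (Real.le_log_iff_exp_le hrpos).2 hrge
      have hLT : T ≤ Real.log (Real.log r) :=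
        (Real.le_log_iff_exp_le (lt_trans one_pos hlogr)).2 hlogrT
      -- g ≤ 2 |b| u
      have hgle : g ≤ 2 * |b| * u := by
        have ha2 : a ≤ |b| * u := by
          rw [div_le_iff₀ hbpos] at hu1; linarith
        have h1 : g ≤ Real.sqrt ((2 * |b| * u)^2) := Real.sqrt_le_sqrt
          (by nlinarith [sq_abs b, mul_nonneg (abs_nonneg b) hupos.le])
        rwa [Real.sqrt_sq (by positivity)] at h1
      have hT1 : |b|/2 * T ≤ b^2*u/g * Real.log (Real.log r) := by
        have h1 : |b|/2 ≤ b^2*u/g := by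
          rw [le_div_iff₀ hgpos]
          calc |b|/2 * g ≤ |b|/2 * (2 * |b| * u) := by
                exact mul_le_mul_of_nonneg_left hgle (by positivity)
            _ = b^2*u := by rw [show |b|/2*(2 * |b| * u) = |b| * |b| * u by ring, abs_mul_abs_self]; ring
        have h2 : (0:ℝ) ≤ |b|/2 := by positivity
        exact mul_le_mul h1 hLT hTpos.le (le_trans h2 h1)
      have hT2 : 0 ≤ g * (d^2*u / (s * Real.log r)) := by positivity
      have hval : |M| + 1 ≤ deriv (fun u : ℝ => Real.sqrt (a ^ 2 + b ^ 2 * u ^ 2) *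
          Real.log (Real.log (Real.sqrt (c ^ 2 + d ^ 2 * u ^ 2)))) u := by
        rw [hderiv u]
        have hTe : |b|/2 * T = |M| + 1 := by
          rw [hT_def]; field_simp
        linarith [hT1, hT2, hTe.symm.le]
      have := hM u
      have h0 : deriv (fun u : ℝ => Real.sqrt (a ^ 2 + b ^ 2 * u ^ 2) *
          Real.log (Real.log (Real.sqrt (c ^ 2 + d ^ 2 * u ^ 2)))) u ≤
          |deriv (fun u : ℝ => Real.sqrt (a ^ 2 + b ^ 2 * u ^ 2) *
          Real.log (Real.log (Real.sqrt (c ^ 2 + d ^ 2 * u ^ 2)))) u| := le_abs_self _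
      have h1 : M ≤ |M| := le_abs_self M
      linarith
    refine ⟨hunb, ?_⟩
    rintro ⟨L, hL0, hLip⟩
    apply hunb
    refine ⟨L, fun u => ?_⟩
    have hD : HasDerivAt (fun u : ℝ => Real.sqrt (a ^ 2 + b ^ 2 * u ^ 2) *
        Real.log (Real.log (Real.sqrt (c ^ 2 + d ^ 2 * u ^ 2)))) ((fun u =>
        b^2*u / Real.sqrt (a^2 + b^2*u^2) *
          Real.log (Real.log (Real.sqrt (c^2 + d^2*u^2)))
        + Real.sqrt (a^2 + b^2*u^2) *
          (d^2*u / ((c^2 + d^2*u^2) * Real.log (Real.sqrt (c^2 + d^2*u^2))))) u) u :=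
      st12_hasDerivAt a b c d ha hc u
    have hle := hD.le_of_lip' hL0 (Filter.Eventually.of_forall (fun x => by
      simpa [Real.norm_eq_abs] using hLip x u))
    rw [hderiv u]
    simpa [Real.norm_eq_abs] using hle

end
end
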